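/- arXiv:2103.03320 — 5 statements merged into one kernel-verified Lean document; each statement's English description precedes it below -/
import Mathlib

section
/- Let A be a bounded selfadjoint operator on a complex Hilbert space ℋ, and let P, Q be orthogonal projections (bounded selfadjoint idempotents) on ℋ with PQ = 0, AP = PA and AQ = QA. Then for all r, s ∈ ℝ the operator rAP + sAQ is bounded selfadjoint, and for every continuous function χ : ℝ → ℝ one has χ(rAP + sAQ) = χ(rA)∘P + χ(sA)∘Q + χ(0)·(1 − P − Q); in particular χ(rAP + sAQ)∘(P + Q) = χ(rA)∘P + χ(sA)∘Q. -/
open Polynomial in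
/-- Polynomial identity: `p(UP + VQ) = p(U)P + p(V)Q + p(0)(1-P-Q)` in any `ℝ`-algebra,
given the commutation and idempotency relations. -/
lemma stmt_1_aeval_formula {B : Type*} [Ring B] [Algebra ℝ B]
    (U V P Q : B) (hPP : P * P = P) (hQQ : Q * Q = Q) (hPQ : P * Q = 0) (hQP : Q * P = 0)
    (hUP : P * U = U * P) (hUQ : Q * U = U * Q) (hVP : P * V = V * P) (hVQ : Q * V = V * Q)
    (p : ℝ[X]) :
    aeval (U * P + V * Q) p =
      aeval U p * P + aeval V p * Q + algebraMap ℝ B (p.eval 0) * (1 - P - Q) := by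
  have e1 : P * (U * P) = U * P := by rw [← mul_assoc, hUP, mul_assoc, hPP]
  have e2 : P * (V * Q) = 0 := by rw [← mul_assoc, hVP, mul_assoc, hPQ, mul_zero]
  have e3 : Q * (U * P) = 0 := by rw [← mul_assoc, hUQ, mul_assoc, hQP, mul_zero]
  have e4 : Q * (V * Q) = V * Q := by rw [← mul_assoc, hVQ, mul_assoc, hQQ]
  have hpow : ∀ n : ℕ, (U * P + V * Q) ^ (n + 1) = U ^ (n + 1) * P + V ^ (n + 1) * Q := by
    intro n
    induction n with
    | zero => simp
    | succ m ih =>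
      have h1 : (U * P + V * Q) ^ (m + 1 + 1) =
          (U ^ (m + 1) * P + V ^ (m + 1) * Q) * (U * P + V * Q) := by
        rw [pow_succ, ih]
      rw [h1]
      simp only [add_mul, mul_add, mul_assoc, e1, e2, e3, e4, mul_zero, add_zero, zero_add]
      rw [← mul_assoc, ← mul_assoc, ← pow_succ, ← pow_succ]
  induction p using Polynomial.induction_on' with
  | add p q hp hq =>
    rw [map_add, map_add, map_add, hp, hq, Polynomial.eval_add, map_add, add_mul, add_mul,
      add_mul]
    abel
  | monomial n a =>
    rw [aeval_monomial, aeval_monomial, aeval_monomial]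
    cases n with
    | zero =>
      simp only [pow_zero, mul_one, Polynomial.eval_monomial, pow_zero, mul_one]
      rw [← mul_add, ← mul_add]
      have : P + Q + (1 - P - Q) = 1 := by abel
      rw [this, mul_one]
    | succ m =>
      have h0 : (Polynomial.monomial (m + 1) a).eval 0 = 0 := by
        simp [Polynomial.eval_monomial]
      rw [h0, map_zero, zero_mul, add_zero, hpow m, mul_add, ← mul_assoc, ← mul_assoc]

/-- If `B` commutes with a selfadjoint operator `U`, it commutes with every element of the
continuous functional calculus of `U`. -/
lemma stmt_1_commute_cfcHom {ℋ : Type*} [NormedAddCommGroup ℋ] [InnerProductSpace ℂ ℋ]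
    [CompleteSpace ℋ] (U B : ℋ →L[ℂ] ℋ) (hU : IsSelfAdjoint U) (h : Commute B U)
    (f : C(spectrum ℝ U, ℝ)) : Commute B (cfcHom (R := ℝ) hU f) := by
  induction f using ContinuousMap.induction_on_of_compact with
  | const r =>
    have : (ContinuousMap.const (spectrum ℝ U) r) = algebraMap ℝ C(spectrum ℝ U, ℝ) r := rfl
    rw [this, AlgHomClass.commutes]
    exact (Commute.symm (Algebra.commutes r B : _))
  | id => rw [cfcHom_id hU]; exact h
  | star_id =>
    have hs : star ((ContinuousMap.id ℝ).restrict (spectrum ℝ U)) =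
        (ContinuousMap.id ℝ).restrict (spectrum ℝ U) := by ext x; simp
    rw [hs, cfcHom_id hU]; exact h
  | add f g hf hg => rw [map_add]; exact hf.add_right hg
  | mul f g hf hg => rw [map_mul]; exact hf.mul_right hg
  | frequently f hf =>
    have hcl : IsClosed {g : C(spectrum ℝ U, ℝ) | Commute B (cfcHom (R := ℝ) hU g)} := by
      have hc : Continuous fun g : C(spectrum ℝ U, ℝ) => cfcHom (R := ℝ) hU g :=
        cfcHom_continuous hU
      exact isClosed_eq (continuous_const.mul hc) (hc.mul continuous_const)
    have hmem : f ∈ closure {g : C(spectrum ℝ U, ℝ) | Commute B (cfcHom (R := ℝ) hU g)} :=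
      mem_closure_iff_frequently.mpr hf
    rwa [hcl.closure_eq] at hmem

set_option maxHeartbeats 2000000 in
/-- Let `A` be a bounded selfadjoint operator on a complex Hilbert space `ℋ`,
and let `P`, `Q` be orthogonal projections on `ℋ` with `PQ = 0`, `AP = PA` and `AQ = QA`. Then
for all `r, s ∈ ℝ` the operator `rAP + sAQ` is bounded selfadjoint, and for every continuous
`χ : ℝ → ℝ` one has
`χ(rAP + sAQ) = χ(rA)P + χ(sA)Q + χ(0)·(1 − P − Q)`;
in particular `χ(rAP + sAQ)(P + Q) = χ(rA)P + χ(sA)Q`. -/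
theorem stmt_1
    {ℋ : Type*} [NormedAddCommGroup ℋ] [InnerProductSpace ℂ ℋ] [CompleteSpace ℋ]
    (A P Q : ℋ →L[ℂ] ℋ) (hA : IsSelfAdjoint A)
    (hP : IsSelfAdjoint P) (hPidem : P * P = P)
    (hQ : IsSelfAdjoint Q) (hQidem : Q * Q = Q)
    (hPQ : P * Q = 0)
    (hAP : A * P = P * A) (hAQ : A * Q = Q * A)
    (r s : ℝ) :
    IsSelfAdjoint ((r : ℂ) • (A * P) + (s : ℂ) • (A * Q)) ∧
      ∀ χ : ℝ → ℝ, Continuous χ →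
        cfc χ ((r : ℂ) • (A * P) + (s : ℂ) • (A * Q)) =
            cfc χ ((r : ℂ) • A) * P + cfc χ ((s : ℂ) • A) * Q
              + (χ 0 : ℂ) • (1 - P - Q) ∧
          cfc χ ((r : ℂ) • (A * P) + (s : ℂ) • (A * Q)) * (P + Q) =
            cfc χ ((r : ℂ) • A) * P + cfc χ ((s : ℂ) • A) * Q := by
  -- basic algebraic facts
  have hQP : Q * P = 0 := by
    have := congrArg star hPQ
    rwa [star_mul, hP.star_eq, hQ.star_eq, star_zero] at this
  set U : ℋ →L[ℂ] ℋ := (r : ℂ) • A with hUdef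
  set V : ℋ →L[ℂ] ℋ := (s : ℂ) • A with hVdef
  have hUP : P * U = U * P := by
    rw [hUdef, mul_smul_comm, smul_mul_assoc, ← hAP]
  have hUQ : Q * U = U * Q := by
    rw [hUdef, mul_smul_comm, smul_mul_assoc, ← hAQ]
  have hVP : P * V = V * P := by
    rw [hVdef, mul_smul_comm, smul_mul_assoc, ← hAP]
  have hVQ : Q * V = V * Q := by
    rw [hVdef, mul_smul_comm, smul_mul_assoc, ← hAQ]
  -- rewrite the operator as `U * P + V * Q`
  have hTrw : (r : ℂ) • (A * P) + (s : ℂ) • (A * Q) = U * P + V * Q := by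
    rw [hUdef, hVdef, smul_mul_assoc, smul_mul_assoc]
  set T : ℋ →L[ℂ] ℋ := U * P + V * Q with hTdef
  -- selfadjointness
  have hU : IsSelfAdjoint U := by
    rw [hUdef, IsSelfAdjoint, star_smul, hA.star_eq, Complex.star_def, Complex.conj_ofReal]
  have hV : IsSelfAdjoint V := by
    rw [hVdef, IsSelfAdjoint, star_smul, hA.star_eq, Complex.star_def, Complex.conj_ofReal]
  have hT : IsSelfAdjoint T := by
    rw [hTdef, IsSelfAdjoint, star_add, star_mul, hP.star_eq, hU.star_eq, hUP,
      star_mul, hQ.star_eq, hV.star_eq, hVQ]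
  rw [hTrw]
  refine ⟨hT, fun χ hχ => ?_⟩
  -- commutation with functional calculus
  have hPU : Commute P U := hUP
  have hQU : Commute Q U := hUQ
  have hPV : Commute P V := hVP
  have hQV : Commute Q V := hVQ
  -- the main identity
  have main : cfc χ T = cfc χ U * P + cfc χ V * Q + algebraMap ℝ (ℋ →L[ℂ] ℋ) (χ 0) * (1 - P - Q) := by
    rcases subsingleton_or_nontrivial ℋ with hsub | hnt
    · exact Subsingleton.elim _ _
    -- choose a compact interval containing all spectra
    set M : ℝ := (‖T‖ ⊔ ‖U‖ ⊔ ‖V‖) * ‖(1 : ℋ →L[ℂ] ℋ)‖ with hMdef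
    have hM0 : 0 ≤ M := mul_nonneg (le_trans (norm_nonneg V) (le_sup_right)) (norm_nonneg _)
    set K : Set ℝ := Set.Icc (-M) M with hKdef
    have h0K : (0 : ℝ) ∈ K := ⟨neg_nonpos.mpr hM0, hM0⟩
    have hball : ∀ W : ℋ →L[ℂ] ℋ, ‖W‖ ≤ ‖T‖ ⊔ ‖U‖ ⊔ ‖V‖ → spectrum ℝ W ⊆ K := by
      intro W hW
      refine (spectrum.subset_closedBall_norm_mul W).trans ?_
      rw [Real.closedBall_eq_Icc, zero_sub, zero_add, hKdef]
      have : ‖W‖ * ‖(1 : ℋ →L[ℂ] ℋ)‖ ≤ M :=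
        mul_le_mul_of_nonneg_right hW (norm_nonneg _)
      exact Set.Icc_subset_Icc (neg_le_neg this) this
    have hKT : spectrum ℝ T ⊆ K := hball T (le_sup_of_le_left le_sup_left)
    have hKU : spectrum ℝ U ⊆ K := hball U (le_sup_of_le_left le_sup_right)
    have hKV : spectrum ℝ V ⊆ K := hball V le_sup_right
    haveI : CompactSpace K := by
      rw [hKdef]; exact isCompact_iff_compactSpace.mp isCompact_Icc
    -- inclusion maps as continuous maps
    let ιT : C(spectrum ℝ T, K) := ⟨Set.inclusion hKT, continuous_inclusion hKT⟩
    let ιU : C(spectrum ℝ U, K) := ⟨Set.inclusion hKU, continuous_inclusion hKU⟩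
    let ιV : C(spectrum ℝ V, K) := ⟨Set.inclusion hKV, continuous_inclusion hKV⟩
    -- the algebra homomorphisms
    let ΦT : C(K, ℝ) →ₐ[ℝ] (ℋ →L[ℂ] ℋ) :=
      ((cfcHom (R := ℝ) hT).toAlgHom).comp (ContinuousMap.compRightAlgHom ℝ ℝ ιT)
    let ΦU : C(K, ℝ) →ₐ[ℝ] (ℋ →L[ℂ] ℋ) :=
      ((cfcHom (R := ℝ) hU).toAlgHom).comp (ContinuousMap.compRightAlgHom ℝ ℝ ιU)
    let ΦV : C(K, ℝ) →ₐ[ℝ] (ℋ →L[ℂ] ℋ) :=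
      ((cfcHom (R := ℝ) hV).toAlgHom).comp (ContinuousMap.compRightAlgHom ℝ ℝ ιV)
    have hΦTc : Continuous ΦT :=
      (cfcHom_continuous hT).comp (ContinuousMap.compRightAlgHom_continuous ℝ ℝ ιT)
    have hΦUc : Continuous ΦU :=
      (cfcHom_continuous hU).comp (ContinuousMap.compRightAlgHom_continuous ℝ ℝ ιU)
    have hΦVc : Continuous ΦV :=
      (cfcHom_continuous hV).comp (ContinuousMap.compRightAlgHom_continuous ℝ ℝ ιV)
    -- each Φ evaluated at a polynomial is `aeval`
    have hpoly : ∀ (W : ℋ →L[ℂ] ℋ) (hW : IsSelfAdjoint W) (hKW : spectrum ℝ W ⊆ K) (p : Polynomial ℝ),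
        cfcHom (R := ℝ) hW (((Polynomial.toContinuousMapOnAlgHom K) p).comp
          ⟨Set.inclusion hKW, continuous_inclusion hKW⟩) = Polynomial.aeval W p := by
      intro W hW hKW p
      let Θ : Polynomial ℝ →ₐ[ℝ] (ℋ →L[ℂ] ℋ) :=
        (((cfcHom (R := ℝ) hW).toAlgHom).comp
          (ContinuousMap.compRightAlgHom ℝ ℝ ⟨Set.inclusion hKW, continuous_inclusion hKW⟩)).comp
          (Polynomial.toContinuousMapOnAlgHom K)
      have heq : ((Polynomial.toContinuousMapOnAlgHom K) Polynomial.X).comp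
          (⟨Set.inclusion hKW, continuous_inclusion hKW⟩ : C(spectrum ℝ W, K)) =
          (ContinuousMap.id ℝ).restrict (spectrum ℝ W) := by
        ext x
        simp [Polynomial.toContinuousMapOnAlgHom, Polynomial.toContinuousMapOn,
          Polynomial.toContinuousMap]
      have hΘ : Θ = Polynomial.aeval W := by
        apply Polynomial.algHom_ext
        simp only [Θ, AlgHom.coe_comp, StarAlgHom.coe_toAlgHom, Function.comp_apply,
          ContinuousMap.compRightAlgHom_apply, Polynomial.aeval_X]
        rw [heq, cfcHom_id hW]
      exact congrFun (congrArg DFunLike.coe hΘ) p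
    -- the set where the two formulas agree
    set S : Set C(K, ℝ) :=
      {f | ΦT f = ΦU f * P + ΦV f * Q + algebraMap ℝ (ℋ →L[ℂ] ℋ) (f ⟨0, h0K⟩) * (1 - P - Q)} with hSdef
    have hSclosed : IsClosed S := by
      apply isClosed_eq hΦTc
      apply Continuous.add
      · exact (hΦUc.mul continuous_const).add (hΦVc.mul continuous_const)
      · exact (((continuous_algebraMap ℝ (ℋ →L[ℂ] ℋ)).comp
          (continuous_eval_const (⟨0, h0K⟩ : K)))).mul continuous_const
    have hSpoly : (polynomialFunctions K : Set C(K, ℝ)) ⊆ S := by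
      intro f hf
      rw [polynomialFunctions_coe] at hf
      obtain ⟨p, rfl⟩ := hf
      show ΦT _ = _
      have h1 : ΦT ((Polynomial.toContinuousMapOnAlgHom K) p) = Polynomial.aeval T p :=
        hpoly T hT hKT p
      have h2 : ΦU ((Polynomial.toContinuousMapOnAlgHom K) p) = Polynomial.aeval U p :=
        hpoly U hU hKU p
      have h3 : ΦV ((Polynomial.toContinuousMapOnAlgHom K) p) = Polynomial.aeval V p :=
        hpoly V hV hKV p
      have h4 : ((Polynomial.toContinuousMapOnAlgHom K) p) (⟨0, h0K⟩ : K) = p.eval 0 := by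
        simp [Polynomial.toContinuousMapOnAlgHom, Polynomial.toContinuousMapOn,
          Polynomial.toContinuousMap]
      rw [h1, h2, h3, h4]
      exact stmt_1_aeval_formula U V P Q hPidem hQidem hPQ hQP hUP hUQ hVP hVQ p
    have hSall : ∀ f : C(K, ℝ), f ∈ S := by
      intro f
      have htop := polynomialFunctions_closure_eq_top (-M) M
      have htop' : (polynomialFunctions K).topologicalClosure = ⊤ := htop
      have hfcl : f ∈ closure (polynomialFunctions K : Set C(K, ℝ)) := by
        rw [← Subalgebra.topologicalClosure_coe, htop']
        simp
      exact (hSclosed.closure_subset_iff.mpr hSpoly) hfcl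
    -- apply to the restriction of χ
    have hχK := hSall ((⟨χ, hχ⟩ : C(ℝ, ℝ)).restrict K)
    rw [hSdef] at hχK
    have hres : ∀ (W : ℋ →L[ℂ] ℋ) (hW : IsSelfAdjoint W) (hKW : spectrum ℝ W ⊆ K),
        cfcHom (R := ℝ) hW (((⟨χ, hχ⟩ : C(ℝ, ℝ)).restrict K).comp
          ⟨Set.inclusion hKW, continuous_inclusion hKW⟩) = cfc χ W := by
      intro W hW hKW
      rw [cfc_apply χ W hW hχ.continuousOn]
      exact congrArg _ (ContinuousMap.ext fun x => rfl)
    have e1 : ΦT ((⟨χ, hχ⟩ : C(ℝ, ℝ)).restrict K) = cfc χ T := hres T hT hKT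
    have e2 : ΦU ((⟨χ, hχ⟩ : C(ℝ, ℝ)).restrict K) = cfc χ U := hres U hU hKU
    have e3 : ΦV ((⟨χ, hχ⟩ : C(ℝ, ℝ)).restrict K) = cfc χ V := hres V hV hKV
    rw [Set.mem_setOf_eq] at hχK
    rw [e1, e2, e3] at hχK
    exact hχK
  -- convert the scalar
  have hsc : algebraMap ℝ (ℋ →L[ℂ] ℋ) (χ 0) * (1 - P - Q) = (χ 0 : ℂ) • ((1 : ℋ →L[ℂ] ℋ) - P - Q) := by
    rw [IsScalarTower.algebraMap_apply ℝ ℂ (ℋ →L[ℂ] ℋ), ← Algebra.smul_def, Complex.coe_algebraMap]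
  rw [hsc] at main
  refine ⟨main, ?_⟩
  rw [main]
  -- second identity
  have hWP : ((1 : ℋ →L[ℂ] ℋ) - P - Q) * P = 0 := by
    rw [sub_mul, sub_mul, one_mul, hPidem, hQP, sub_zero, sub_self]
  have hWQ : ((1 : ℋ →L[ℂ] ℋ) - P - Q) * Q = 0 := by
    rw [sub_mul, sub_mul, one_mul, hPQ, hQidem, sub_zero, sub_self]
  have expand : ∀ X Y : ℋ →L[ℂ] ℋ, (X * P + Y * Q) * (P + Q) = X * P + Y * Q := fun X Y => by
    rw [add_mul, mul_add, mul_add, mul_assoc, mul_assoc, mul_assoc, mul_assoc,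
      hPidem, hPQ, hQP, hQidem, mul_zero, mul_zero, add_zero, zero_add]
  rw [add_mul, smul_mul_assoc, mul_add ((1 : ℋ →L[ℂ] ℋ) - P - Q), hWP, hWQ, add_zero,
    smul_zero, add_zero, expand]
end

section
/- Let T be a bounded operator on ℌ. Then T is a 2-point operator satisfying T ∘ U_φ = U_φ ∘ T for all φ ∈ ℝ if and only if there exists a bounded operator s on 𝔥 with 0 ≤ s ≤ 1 such that T(f, g) = ((1 − s)f, ζ(s(ζg))) for all (f, g) ∈ ℌ. -/
noncomputable section

/-- `𝔥 := ℓ²(ℤ)`, the Hilbert space of square-summable complex-valued functions on `ℤ`. -/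
abbrev smallH : Type := lp (fun _ : ℤ => ℂ) 2

/-- `ℌ := 𝔥 ⊕ 𝔥`, the Hilbert space direct sum of `𝔥` with itself. -/
abbrev bigH : Type := WithLp 2 (smallH × smallH)

/-- `ζ`, the coordinatewise complex conjugation on `𝔥`. -/
def zeta (f : smallH) : smallH := star f

/-- Identification of an element of `ℌ` with a pair. -/
def toPair (x : bigH) : smallH × smallH := WithLp.equiv 2 (smallH × smallH) x

/-- Identification of a pair with an element of `ℌ`. -/
def ofPair (p : smallH × smallH) : bigH := (WithLp.equiv 2 (smallH × smallH)).symm p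

/-- The conjugation `Γ(f, g) := (ζg, ζf)` on `ℌ`. -/
def Gamma (x : bigH) : bigH := ofPair (zeta (toPair x).2, zeta (toPair x).1)

/-- A bounded operator `T` on `ℌ` is a 2-point operator if `T* = T`, `Γ∘T∘Γ = 1 − T` and
`0 ≤ T ≤ 1`. -/
def IsTwoPoint (T : bigH →L[ℂ] bigH) : Prop :=
  IsSelfAdjoint T ∧ (∀ x : bigH, Gamma (T (Gamma x)) = x - T x) ∧
    T.IsPositive ∧ ((1 : bigH →L[ℂ] bigH) - T).IsPositive

/-- `T` commutes with all gauge transformations `U_φ(f, g) := (e^{iφ}f, e^{−iφ}g)`. -/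
def GaugeInvariant (T : bigH →L[ℂ] bigH) : Prop :=
  ∀ (φ : ℝ) (f g : smallH),
    toPair (T (ofPair
        (Complex.exp (Complex.I * φ) • f, Complex.exp (-(Complex.I * φ)) • g))) =
      (Complex.exp (Complex.I * φ) • (toPair (T (ofPair (f, g)))).1,
        Complex.exp (-(Complex.I * φ)) • (toPair (T (ofPair (f, g)))).2)

/- ### Auxiliary material -/

local notation "⟪" x ", " y "⟫" => @inner ℂ _ _ x y

lemma toPair_ofPair (p : smallH × smallH) : toPair (ofPair p) = p := rfl

lemma zeta_zeta (f : smallH) : zeta (zeta f) = f := star_star f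

lemma zeta_zero : zeta 0 = 0 := star_zero _

lemma zeta_sub (f g : smallH) : zeta (f - g) = zeta f - zeta g := star_sub f g

lemma zeta_smul (c : ℂ) (f : smallH) : zeta (c • f) = (starRingEnd ℂ) c • zeta f :=
  star_smul c f

lemma inner_zeta (f g : smallH) : ⟪zeta f, zeta g⟫ = ⟪g, f⟫ := by
  rw [lp.inner_eq_tsum, lp.inner_eq_tsum]
  refine tsum_congr fun i => ?_
  simp [zeta, lp.star_apply, RCLike.inner_apply, mul_comm]

lemma inner_zeta_left (u v : smallH) : ⟪zeta u, v⟫ = ⟪zeta v, u⟫ := by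
  conv_lhs => rw [← zeta_zeta v, inner_zeta]

lemma inner_zeta_right (u v : smallH) : ⟪u, zeta v⟫ = ⟪v, zeta u⟫ := by
  conv_lhs => rw [← zeta_zeta u, inner_zeta]

lemma inner_bigH (x y : bigH) :
    ⟪x, y⟫ = ⟪(toPair x).1, (toPair y).1⟫ + ⟪(toPair x).2, (toPair y).2⟫ := rfl

lemma toPair_sub (x y : bigH) : toPair (x - y) = toPair x - toPair y := rfl

/-- The continuous linear equivalence `ℌ ≃ 𝔥 × 𝔥`. -/
def eL : bigH ≃L[ℂ] smallH × smallH := WithLp.prodContinuousLinearEquiv 2 ℂ smallH smallH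

/-- The inclusion `f ↦ (f, 0)`. -/
def inlL : smallH →L[ℂ] bigH :=
  (eL.symm : (smallH × smallH) →L[ℂ] bigH) ∘L ContinuousLinearMap.inl ℂ smallH smallH

/-- The projection `(f, g) ↦ f`. -/
def fstL : bigH →L[ℂ] smallH :=
  ContinuousLinearMap.fst ℂ smallH smallH ∘L (eL : bigH →L[ℂ] smallH × smallH)

lemma adjoint_inlL : ContinuousLinearMap.adjoint inlL = fstL := by
  symm
  rw [ContinuousLinearMap.eq_adjoint_iff]
  intro x f
  rw [show ⟪x, inlL f⟫ = ⟪(toPair x).1, f⟫ + ⟪(toPair x).2, (0 : smallH)⟫ from rfl]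
  simp
  rfl

theorem stmt_4 (T : bigH →L[ℂ] bigH) :
    (IsTwoPoint T ∧ GaugeInvariant T) ↔
      ∃ s : smallH →L[ℂ] smallH,
        s.IsPositive ∧ ((1 : smallH →L[ℂ] smallH) - s).IsPositive ∧
        ∀ f g : smallH,
          toPair (T (ofPair (f, g))) =
            (((1 : smallH →L[ℂ] smallH) - s) f, zeta (s (zeta g))) := by
  constructor
  · rintro ⟨⟨hsa, hG, hpos, hpos'⟩, hg⟩
    have hI : Complex.exp (Complex.I * ((Real.pi / 2 : ℝ) : ℂ)) = Complex.I := by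
      rw [mul_comm, Complex.exp_mul_I]
      push_cast
      simp [Complex.cos_pi_div_two, Complex.sin_pi_div_two]
    have hI' : Complex.exp (-(Complex.I * ((Real.pi / 2 : ℝ) : ℂ))) = -Complex.I := by
      rw [Complex.exp_neg, hI, Complex.inv_I]
    have hIne : (Complex.I : ℂ) - -Complex.I ≠ 0 := by
      simp [sub_eq_zero, Complex.ext_iff]
    -- vanishing of the off-diagonal blocks
    have hsnd : ∀ f : smallH, (toPair (T (ofPair (f, 0)))).2 = 0 := by
      intro f
      have h := hg (Real.pi / 2) f 0
      rw [hI, hI', smul_zero] at h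
      have e1 : ofPair (Complex.I • f, (0 : smallH)) = Complex.I • ofPair (f, 0) := by
        show ofPair _ = ofPair (Complex.I • (f, (0 : smallH)))
        congr 1
        simp
      rw [e1, map_smul] at h
      have h2 := congrArg Prod.snd h
      have h4 : Complex.I • (toPair (T (ofPair (f, 0)))).2 =
          (-Complex.I) • (toPair (T (ofPair (f, 0)))).2 := h2
      have h5 : (Complex.I - -Complex.I) • (toPair (T (ofPair (f, 0)))).2 = 0 := by
        rw [sub_smul, h4, sub_self]
      exact (smul_eq_zero.mp h5).resolve_left hIne
    have hfst : ∀ g : smallH, (toPair (T (ofPair (0, g)))).1 = 0 := by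
      intro g
      have h := hg (Real.pi / 2) 0 g
      rw [hI, hI', smul_zero] at h
      have e1 : ofPair ((0 : smallH), -Complex.I • g) = (-Complex.I) • ofPair (0, g) := by
        show ofPair _ = ofPair ((-Complex.I) • ((0 : smallH), g))
        congr 1
        simp
      rw [e1, map_smul] at h
      have h2 := congrArg Prod.fst h
      have h4 : (-Complex.I) • (toPair (T (ofPair (0, g)))).1 =
          Complex.I • (toPair (T (ofPair (0, g)))).1 := h2
      have h5 : (Complex.I - -Complex.I) • (toPair (T (ofPair (0, g)))).1 = 0 := by
        rw [sub_smul, h4, sub_self]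
      exact (smul_eq_zero.mp h5).resolve_left hIne
    -- block-diagonal decomposition
    have hdecomp : ∀ f g : smallH, toPair (T (ofPair (f, g))) =
        ((toPair (T (ofPair (f, 0)))).1, (toPair (T (ofPair (0, g)))).2) := by
      intro f g
      have e : ofPair (f, g) = ofPair (f, 0) + ofPair (0, g) := by
        show ofPair _ = ofPair ((f, (0 : smallH)) + ((0 : smallH), g))
        congr 1
        simp
      rw [e, map_add]
      show toPair (T (ofPair (f, 0))) + toPair (T (ofPair (0, g))) = _
      rw [Prod.ext_iff]
      constructor
      · show (toPair (T (ofPair (f, 0)))).1 + (toPair (T (ofPair (0, g)))).1 = _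
        rw [hfst g, add_zero]
      · show (toPair (T (ofPair (f, 0)))).2 + (toPair (T (ofPair (0, g)))).2 = _
        rw [hsnd f, zero_add]
    -- consequence of the Γ-relation
    have hGam : ∀ f : smallH, zeta ((toPair (T (ofPair (0, zeta f)))).2) =
        f - (toPair (T (ofPair (f, 0)))).1 := by
      intro f
      have h := hG (ofPair (f, 0))
      have e0 : Gamma (ofPair (f, 0)) = ofPair (0, zeta f) := by
        simp [Gamma, toPair_ofPair, zeta_zero]
      rw [e0] at h
      have h2 := congrArg (fun z : bigH => (toPair z).1) h
      have e1 : (toPair (Gamma (T (ofPair (0, zeta f))))).1 =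
          zeta ((toPair (T (ofPair (0, zeta f)))).2) := rfl
      have e2 : (toPair (ofPair (f, 0) - T (ofPair (f, 0)))).1 =
          f - (toPair (T (ofPair (f, 0)))).1 := rfl
      simpa [e1, e2] using h2
    set a : smallH →L[ℂ] smallH := fstL ∘L (T ∘L inlL) with ha
    have ha_apply : ∀ f : smallH, a f = (toPair (T (ofPair (f, 0)))).1 := fun f => rfl
    refine ⟨1 - a, ?_, ?_, ?_⟩
    · have e : (1 : smallH →L[ℂ] smallH) - a =
          ContinuousLinearMap.adjoint inlL ∘L ((1 - T) ∘L inlL) := by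
        rw [adjoint_inlL]
        refine ContinuousLinearMap.ext fun f => ?_
        show (1 : smallH →L[ℂ] smallH) f - a f = fstL ((1 - T) (inlL f))
        rw [ContinuousLinearMap.sub_apply, map_sub]
        rfl
      rw [e]
      exact hpos'.adjoint_conj inlL
    · rw [sub_sub_cancel]
      have e : a = ContinuousLinearMap.adjoint inlL ∘L (T ∘L inlL) := by
        rw [adjoint_inlL]
      rw [e]
      exact hpos.adjoint_conj inlL
    · intro f g
      rw [hdecomp f g]
      have h1 : ((1 : smallH →L[ℂ] smallH) - (1 - a)) f = a f := by
        simp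
      have h2 : zeta (((1 : smallH →L[ℂ] smallH) - a) (zeta g)) =
          (toPair (T (ofPair (0, g)))).2 := by
        have := hGam (zeta g)
        rw [zeta_zeta] at this
        have h3 : (toPair (T (ofPair (0, g)))).2 =
            zeta (zeta g - (toPair (T (ofPair (zeta g, 0)))).1) := by
          rw [← this, zeta_zeta]
        rw [h3]
        have h4 : ((1 : smallH →L[ℂ] smallH) - a) (zeta g) =
            zeta g - (toPair (T (ofPair (zeta g, 0)))).1 := by
          rw [ContinuousLinearMap.sub_apply, ContinuousLinearMap.one_apply, ha_apply]
        rw [h4]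
      rw [Prod.ext_iff]
      refine ⟨?_, h2.symm⟩
      rw [h1]
      exact (ha_apply f).symm
  · rintro ⟨s, hs, hs', hT⟩
    have hs_symm := ContinuousLinearMap.isSelfAdjoint_iff_isSymmetric.mp hs.isSelfAdjoint
    have hs'_symm := ContinuousLinearMap.isSelfAdjoint_iff_isSymmetric.mp hs'.isSelfAdjoint
    have hTx : ∀ x : bigH, toPair (T x) =
        (((1 : smallH →L[ℂ] smallH) - s) (toPair x).1, zeta (s (zeta (toPair x).2))) :=
      fun x => hT (toPair x).1 (toPair x).2
    -- self-adjointness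
    have hsa : IsSelfAdjoint T := by
      rw [ContinuousLinearMap.isSelfAdjoint_iff_isSymmetric]
      intro x y
      show ⟪T x, y⟫ = ⟪x, T y⟫
      rw [inner_bigH (T x) y, inner_bigH x (T y), hTx x, hTx y]
      have e1 : ⟪((1 : smallH →L[ℂ] smallH) - s) (toPair x).1, (toPair y).1⟫ =
          ⟪(toPair x).1, ((1 : smallH →L[ℂ] smallH) - s) (toPair y).1⟫ :=
        hs'_symm _ _
      have e2 : ⟪zeta (s (zeta (toPair x).2)), (toPair y).2⟫ =
          ⟪(toPair x).2, zeta (s (zeta (toPair y).2))⟫ := by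
        calc ⟪zeta (s (zeta (toPair x).2)), (toPair y).2⟫
            = ⟪zeta (toPair y).2, s (zeta (toPair x).2)⟫ := inner_zeta_left _ _
          _ = ⟪s (zeta (toPair y).2), zeta (toPair x).2⟫ :=
              (hs_symm (zeta (toPair y).2) (zeta (toPair x).2)).symm
          _ = ⟪(toPair x).2, zeta (s (zeta (toPair y).2))⟫ :=
              (inner_zeta_right _ _).symm
      rw [e1, e2]
    refine ⟨⟨hsa, ?_, ?_, ?_⟩, ?_⟩
    · -- Gamma relation
      intro x
      have lhs : Gamma (T (Gamma x)) =
          ofPair (s (toPair x).1,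
            zeta (((1 : smallH →L[ℂ] smallH) - s) (zeta (toPair x).2))) := by
        show ofPair (zeta (toPair (T (Gamma x))).2, zeta (toPair (T (Gamma x))).1) = _
        rw [hTx (Gamma x)]
        show ofPair (zeta (zeta (s (zeta (toPair (Gamma x)).2))),
            zeta (((1 : smallH →L[ℂ] smallH) - s) (toPair (Gamma x)).1)) = _
        have g1 : (toPair (Gamma x)).1 = zeta (toPair x).2 := rfl
        have g2 : (toPair (Gamma x)).2 = zeta (toPair x).1 := rfl
        rw [g1, g2, zeta_zeta, zeta_zeta]
      rw [lhs]
      have rhs : x - T x =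
          ofPair (s (toPair x).1,
            zeta (((1 : smallH →L[ℂ] smallH) - s) (zeta (toPair x).2))) := by
        have h1 : toPair (x - T x) = toPair x - toPair (T x) := rfl
        have h2 : toPair (x - T x) =
            (s (toPair x).1,
              zeta (((1 : smallH →L[ℂ] smallH) - s) (zeta (toPair x).2))) := by
          rw [h1, hTx x, Prod.ext_iff]
          constructor
          · show (toPair x).1 - ((1 : smallH →L[ℂ] smallH) - s) (toPair x).1 = _
            rw [ContinuousLinearMap.sub_apply, ContinuousLinearMap.one_apply,
              sub_sub_cancel]
          · show (toPair x).2 - zeta (s (zeta (toPair x).2)) = _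
            rw [ContinuousLinearMap.sub_apply, ContinuousLinearMap.one_apply,
              zeta_sub, zeta_zeta]
        exact congrArg ofPair h2
      rw [rhs]
    · -- positivity of T
      refine ⟨ContinuousLinearMap.isSelfAdjoint_iff_isSymmetric.mp hsa, fun x => ?_⟩
      rw [ContinuousLinearMap.reApplyInnerSelf_apply]
      rw [inner_bigH (T x) x, hTx x]
      rw [map_add]
      refine add_nonneg (hs'.re_inner_nonneg_left _) ?_
      have e : ⟪zeta (s (zeta (toPair x).2)), (toPair x).2⟫ =
          ⟪zeta (toPair x).2, s (zeta (toPair x).2)⟫ := inner_zeta_left _ _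
      rw [e]
      exact hs.re_inner_nonneg_right _
    · -- positivity of 1 - T
      refine ⟨ContinuousLinearMap.isSelfAdjoint_iff_isSymmetric.mp
        ((IsSelfAdjoint.one (bigH →L[ℂ] bigH)).sub hsa), fun x => ?_⟩
      rw [ContinuousLinearMap.reApplyInnerSelf_apply]
      have h1 : (1 - T) x = x - T x := by
        rw [ContinuousLinearMap.sub_apply, ContinuousLinearMap.one_apply]
      have h2 : toPair ((1 - T) x) =
          (s (toPair x).1,
            zeta (((1 : smallH →L[ℂ] smallH) - s) (zeta (toPair x).2))) := by
        rw [h1, toPair_sub, hTx x, Prod.ext_iff]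
        constructor
        · show (toPair x).1 - ((1 : smallH →L[ℂ] smallH) - s) (toPair x).1 = _
          rw [ContinuousLinearMap.sub_apply, ContinuousLinearMap.one_apply,
            sub_sub_cancel]
        · show (toPair x).2 - zeta (s (zeta (toPair x).2)) = _
          rw [ContinuousLinearMap.sub_apply, ContinuousLinearMap.one_apply,
            zeta_sub, zeta_zeta]
      rw [inner_bigH ((1 - T) x) x, h2, map_add]
      refine add_nonneg (hs.re_inner_nonneg_left _) ?_
      have e : ⟪zeta (((1 : smallH →L[ℂ] smallH) - s) (zeta (toPair x).2)), (toPair x).2⟫ =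
          ⟪zeta (toPair x).2, ((1 : smallH →L[ℂ] smallH) - s) (zeta (toPair x).2)⟫ :=
        inner_zeta_left _ _
      rw [e]
      exact hs'.re_inner_nonneg_right _
    · -- gauge invariance
      intro φ f g
      rw [hT, hT, Prod.ext_iff]
      constructor
      · exact map_smul _ _ _
      · show zeta (s (zeta (Complex.exp (-(Complex.I * φ)) • g))) = _
        rw [zeta_smul, map_smul, zeta_smul, Complex.conj_conj]
end
end

section
/- Let u₀, u₁, u₂ be odd real trigonometric polynomials and u₃ an even real trigonometric polynomial, with u₀ not identically zero and (u₁, u₂, u₃) not all identically zero. Write u² := u₁² + u₂² + u₃² and uu' := u₁u₁' + u₂u₂' + u₃u₃'. Then u₀'(k)²·u²(k) = (uu')(k)² for all k ∈ ℝ if and only if u₀(k)² = u²(k) for all k ∈ ℝ. -/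
open Filter Topology

/-- A real trigonometric polynomial: a function of the form
`k ↦ a₀ + Σ_{n=1}^{N} (aₙ cos(nk) + bₙ sin(nk))` with real coefficients. -/
def IsRealTrigPoly (f : ℝ → ℝ) : Prop :=
  ∃ (N : ℕ) (a b : ℕ → ℝ), ∀ k : ℝ,
    f k = a 0 + ∑ n ∈ Finset.Icc 1 N, (a n * Real.cos (n * k) + b n * Real.sin (n * k))

private lemma analyticAt_rcos (x : ℝ) : AnalyticAt ℝ Real.cos x := by
  have h1 : AnalyticAt ℂ Complex.cos (x : ℂ) := Complex.differentiable_cos.analyticAt _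
  have h2 : AnalyticAt ℝ (fun y : ℝ => (Complex.cos (y : ℂ)).re) x :=
    (Complex.reCLM.analyticAt _).comp ((h1.restrictScalars).comp (Complex.ofRealCLM.analyticAt x))
  exact h2.congr (Filter.Eventually.of_forall fun y => Complex.cos_ofReal_re y)

private lemma analyticAt_rsin (x : ℝ) : AnalyticAt ℝ Real.sin x := by
  have h1 : AnalyticAt ℂ Complex.sin (x : ℂ) := Complex.differentiable_sin.analyticAt _
  have h2 : AnalyticAt ℝ (fun y : ℝ => (Complex.sin (y : ℂ)).re) x :=
    (Complex.reCLM.analyticAt _).comp ((h1.restrictScalars).comp (Complex.ofRealCLM.analyticAt x))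
  exact h2.congr (Filter.Eventually.of_forall fun y => Complex.sin_ofReal_re y)

private lemma IsRealTrigPoly.analyticAt {f : ℝ → ℝ} (hf : IsRealTrigPoly f) (x : ℝ) :
    AnalyticAt ℝ f x := by
  obtain ⟨N, a, b, h⟩ := hf
  have hfe : f = fun k => a 0 + ∑ n ∈ Finset.Icc 1 N,
      (a n * Real.cos (n * k) + b n * Real.sin (n * k)) := funext h
  rw [hfe]
  apply analyticAt_const.add
  apply Finset.analyticAt_fun_sum
  intro n _
  exact (analyticAt_const.mul ((analyticAt_rcos _).comp (analyticAt_const.mul analyticAt_id))).add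
    (analyticAt_const.mul ((analyticAt_rsin _).comp (analyticAt_const.mul analyticAt_id)))

private lemma analyticAt_sqrt {x : ℝ} (hx : 0 < x) : AnalyticAt ℝ Real.sqrt x := by
  have h1 : AnalyticAt ℂ (fun z : ℂ => z ^ (((1 : ℝ) / 2 : ℝ) : ℂ)) (x : ℂ) :=
    analyticAt_id.cpow analyticAt_const (Complex.ofReal_mem_slitPlane.2 hx)
  have h2 : AnalyticAt ℝ (fun y : ℝ => (((y : ℂ)) ^ (((1 : ℝ) / 2 : ℝ) : ℂ)).re) x :=
    (Complex.reCLM.analyticAt _).comp ((h1.restrictScalars).comp (Complex.ofRealCLM.analyticAt x))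
  apply h2.congr
  filter_upwards [eventually_gt_nhds hx] with y hy
  rw [← Complex.ofReal_cpow hy.le, Complex.ofReal_re, ← Real.sqrt_eq_rpow]

private lemma key {S u₀ : ℝ → ℝ} (hS : ∀ x, AnalyticAt ℝ S x) (hu : ∀ x, AnalyticAt ℝ u₀ x)
    (hSnn : ∀ k, 0 ≤ S k) {k₀ : ℝ} (hpos : 0 < S k₀)
    (hid : ∀ k, (deriv u₀ k) ^ 2 * S k = (deriv S k / 2) ^ 2) :
    ∃ d : ℝ, ∀ k, S k = (u₀ k + d) ^ 2 := by
  set U : Set ℝ := {k | 0 < S k} with hUdef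
  have hScont : Continuous S := continuous_iff_continuousAt.2 fun x => (hS x).continuousAt
  have hUopen : IsOpen U := isOpen_lt continuous_const hScont
  have hk₀U : k₀ ∈ U := hpos
  set v : ℝ → ℝ := fun k => Real.sqrt (S k) with hvdef
  have hva : AnalyticOnNhd ℝ v U := fun x hx => (analyticAt_sqrt hx).comp (hS x)
  have hu' : ∀ x : ℝ, AnalyticAt ℝ (deriv u₀) x := fun x =>
    (AnalyticOnNhd.deriv (fun y _ => hu y : AnalyticOnNhd ℝ u₀ Set.univ)) x (Set.mem_univ x)
  have hvd : ∀ x ∈ U, HasDerivAt v (1 / (2 * v x) * deriv S x) x := fun x hx =>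
    (Real.hasDerivAt_sqrt (ne_of_gt hx)).comp x (hS x).differentiableAt.hasDerivAt
  have hsq : ∀ x ∈ U, (deriv v x) ^ 2 = (deriv u₀ x) ^ 2 := by
    intro x hx
    have hvx : v x ^ 2 = S x := Real.sq_sqrt (hSnn x)
    have hvpos : 0 < v x := Real.sqrt_pos.2 hx
    have hd : deriv v x = 1 / (2 * v x) * deriv S x := (hvd x hx).deriv
    rw [hd]
    have h1 := hid x
    field_simp
    nlinarith [h1, hvx, hvpos]
  have hdva : AnalyticOnNhd ℝ (deriv v) U := hva.deriv_of_isOpen hUopen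
  have hUev : ∀ᶠ k in 𝓝 k₀, k ∈ U := hUopen.eventually_mem hk₀U
  -- get a sign ε with deriv v = ε * deriv u₀ near k₀
  have hsign : ∃ ε : ℝ, ε ^ 2 = 1 ∧ ∀ᶠ k in 𝓝 k₀, deriv v k = ε * deriv u₀ k := by
    have hfA : AnalyticAt ℝ (fun k => deriv v k - deriv u₀ k) k₀ :=
      (hdva k₀ hk₀U).sub (hu' k₀)
    rcases hfA.eventually_eq_zero_or_eventually_ne_zero with hcase | hcase
    · refine ⟨1, by norm_num, ?_⟩
      filter_upwards [hcase] with k hk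
      have : deriv v k - deriv u₀ k = 0 := hk
      linarith [this]
    · refine ⟨-1, by norm_num, ?_⟩
      have hg0 : ∀ᶠ k in 𝓝[≠] k₀, deriv v k + deriv u₀ k = 0 := by
        filter_upwards [hcase, hUev.filter_mono nhdsWithin_le_nhds] with k hkne hkU
        have h2 := hsq k hkU
        have hmul : (deriv v k - deriv u₀ k) * (deriv v k + deriv u₀ k) = 0 := by nlinarith [h2]
        rcases mul_eq_zero.1 hmul with h | h
        · exact absurd h hkne
        · exact h
      have hgc : ContinuousAt (fun k => deriv v k + deriv u₀ k) k₀ :=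
        ((hdva k₀ hk₀U).add (hu' k₀)).continuousAt
      have hgk₀ : deriv v k₀ + deriv u₀ k₀ = 0 := by
        have h1 : Tendsto (fun k => deriv v k + deriv u₀ k) (𝓝[≠] k₀)
            (𝓝 (deriv v k₀ + deriv u₀ k₀)) := hgc.continuousWithinAt.tendsto
        have h2 : Tendsto (fun k => deriv v k + deriv u₀ k) (𝓝[≠] k₀) (𝓝 (0 : ℝ)) :=
          tendsto_const_nhds.congr' (hg0.mono fun k hk => hk.symm)
        exact tendsto_nhds_unique h1 h2
      rw [eventually_nhdsWithin_iff] at hg0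
      filter_upwards [hg0] with k hk
      by_cases hkk : k = k₀
      · subst hkk; linarith [hgk₀]
      · have := hk (by simpa using hkk)
        linarith [this]
  obtain ⟨ε, hε2, hev⟩ := hsign
  obtain ⟨δ, hδpos, hball⟩ := Metric.eventually_nhds_iff.1 (hUev.and hev)
  set w : ℝ → ℝ := fun k => v k - ε * u₀ k with hwdef
  have hw : ∀ x ∈ Metric.ball k₀ δ, HasDerivAt w 0 x := by
    intro x hx
    have hx' := hball (Metric.mem_ball.1 hx)
    have h1 : HasDerivAt v (deriv v x) x := (hva x hx'.1).differentiableAt.hasDerivAt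
    have h2 : HasDerivAt (fun k => ε * u₀ k) (ε * deriv u₀ x) x :=
      ((hu x).differentiableAt.hasDerivAt.const_mul ε)
    have h3 := h1.fun_sub h2
    rw [hx'.2] at h3
    simpa using h3
  have hconst : ∀ y ∈ Metric.ball k₀ δ, w y = w k₀ := by
    intro y hy
    have hb := (convex_ball k₀ δ).norm_image_sub_le_of_norm_hasDerivWithin_le
      (f' := fun _ => (0 : ℝ)) (C := 0) (fun x hx => (hw x hx).hasDerivWithinAt)
      (fun x _ => by simp) (Metric.mem_ball_self hδpos) hy
    have hb' : ‖w y - w k₀‖ ≤ 0 := by simpa using hb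
    exact sub_eq_zero.1 (norm_le_zero_iff.1 hb')
  refine ⟨ε * (v k₀ - ε * u₀ k₀), ?_⟩
  set c : ℝ := v k₀ - ε * u₀ k₀ with hcdef
  have hFz : ∀ y ∈ Metric.ball k₀ δ, S y - (u₀ y + ε * c) ^ 2 = 0 := by
    intro y hy
    have h1 : w y = c := hconst y hy
    have h2 : v y = ε * u₀ y + c := by simp only [hwdef] at h1; linarith
    have h3 : v y ^ 2 = S y := Real.sq_sqrt (hSnn y)
    have h4 : S y = (ε * u₀ y + c) ^ 2 := by rw [← h3, h2]
    linear_combination h4 + (u₀ y ^ 2 - c ^ 2) * hε2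
  have hFA : AnalyticOnNhd ℝ (fun k => S k - (u₀ k + ε * c) ^ 2) Set.univ := fun x _ =>
    (hS x).sub (((hu x).add analyticAt_const).pow 2)
  have hFev : (fun k => S k - (u₀ k + ε * c) ^ 2) =ᶠ[𝓝 k₀] 0 := by
    filter_upwards [Metric.ball_mem_nhds k₀ hδpos] with y hy
    exact hFz y hy
  have := hFA.eqOn_zero_of_preconnected_of_eventuallyEq_zero isPreconnected_univ
    (Set.mem_univ k₀) hFev
  intro k
  have hk := this (Set.mem_univ k)
  simp only [Pi.zero_apply] at hk
  linarith [sub_eq_zero.1 hk]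

/-- Let `u₀, u₁, u₂` be odd and `u₃` an even real trigonometric polynomial,
with `u₀` not identically zero and `(u₁, u₂, u₃)` not all identically zero.  Writing
`u² := u₁² + u₂² + u₃²` and `uu' := u₁u₁' + u₂u₂' + u₃u₃'`, one has
`u₀'(k)²·u²(k) = (uu')(k)²` for all `k ∈ ℝ` if and only if `u₀(k)² = u²(k)` for all `k ∈ ℝ`. -/
theorem stmt_16 (u₀ u₁ u₂ u₃ : ℝ → ℝ)
    (h₀ : IsRealTrigPoly u₀) (h₁ : IsRealTrigPoly u₁)
    (h₂ : IsRealTrigPoly u₂) (h₃ : IsRealTrigPoly u₃)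
    (hodd₀ : ∀ k : ℝ, u₀ (-k) = -u₀ k)
    (hodd₁ : ∀ k : ℝ, u₁ (-k) = -u₁ k)
    (hodd₂ : ∀ k : ℝ, u₂ (-k) = -u₂ k)
    (heven₃ : ∀ k : ℝ, u₃ (-k) = u₃ k)
    (hu₀ : ¬ ∀ k : ℝ, u₀ k = 0)
    (hu : ¬ ∀ k : ℝ, u₁ k = 0 ∧ u₂ k = 0 ∧ u₃ k = 0) :
    (∀ k : ℝ, (deriv u₀ k) ^ 2 * (u₁ k ^ 2 + u₂ k ^ 2 + u₃ k ^ 2) =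
        (u₁ k * deriv u₁ k + u₂ k * deriv u₂ k + u₃ k * deriv u₃ k) ^ 2) ↔
      (∀ k : ℝ, u₀ k ^ 2 = u₁ k ^ 2 + u₂ k ^ 2 + u₃ k ^ 2) := by
  have a₀ := h₀.analyticAt
  have a₁ := h₁.analyticAt
  have a₂ := h₂.analyticAt
  have a₃ := h₃.analyticAt
  set S : ℝ → ℝ := fun k => u₁ k ^ 2 + u₂ k ^ 2 + u₃ k ^ 2 with hSdef
  have hSa : ∀ x, AnalyticAt ℝ S x := fun x =>
    (((a₁ x).pow 2).add ((a₂ x).pow 2)).add ((a₃ x).pow 2)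
  have hSnn : ∀ k, 0 ≤ S k := fun k => by positivity
  have hderivS : ∀ k, deriv S k =
      2 * (u₁ k * deriv u₁ k + u₂ k * deriv u₂ k + u₃ k * deriv u₃ k) := by
    intro k
    have d1 : HasDerivAt (fun x => u₁ x ^ 2) (2 * u₁ k ^ 1 * deriv u₁ k) k := by
      simpa using ((a₁ k).differentiableAt.hasDerivAt.fun_pow 2)
    have d2 : HasDerivAt (fun x => u₂ x ^ 2) (2 * u₂ k ^ 1 * deriv u₂ k) k := by
      simpa using ((a₂ k).differentiableAt.hasDerivAt.fun_pow 2)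
    have d3 : HasDerivAt (fun x => u₃ x ^ 2) (2 * u₃ k ^ 1 * deriv u₃ k) k := by
      simpa using ((a₃ k).differentiableAt.hasDerivAt.fun_pow 2)
    have := ((d1.fun_add d2).fun_add d3).deriv
    rw [this]; ring
  constructor
  · intro hp
    -- find a point where S is positive
    push_neg at hu
    obtain ⟨k₁, hk₁⟩ := hu
    have hpos : 0 < S k₁ := by
      rcases lt_or_eq_of_le (hSnn k₁) with h | h
      · exact h
      · exfalso
        have hsum : u₁ k₁ ^ 2 + u₂ k₁ ^ 2 + u₃ k₁ ^ 2 = 0 := h.symm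
        have h1 : u₁ k₁ = 0 := sq_eq_zero_iff.1 (le_antisymm
          (by nlinarith [sq_nonneg (u₂ k₁), sq_nonneg (u₃ k₁)]) (sq_nonneg _))
        have h2 : u₂ k₁ = 0 := sq_eq_zero_iff.1 (le_antisymm
          (by nlinarith [sq_nonneg (u₁ k₁), sq_nonneg (u₃ k₁)]) (sq_nonneg _))
        have h3 : u₃ k₁ = 0 := sq_eq_zero_iff.1 (le_antisymm
          (by nlinarith [sq_nonneg (u₁ k₁), sq_nonneg (u₂ k₁)]) (sq_nonneg _))
        exact hk₁ h1 h2 h3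
    have hid : ∀ k, (deriv u₀ k) ^ 2 * S k = (deriv S k / 2) ^ 2 := by
      intro k
      rw [hderivS k]
      have := hp k
      calc (deriv u₀ k) ^ 2 * S k
          = (u₁ k * deriv u₁ k + u₂ k * deriv u₂ k + u₃ k * deriv u₃ k) ^ 2 := this
        _ = (2 * (u₁ k * deriv u₁ k + u₂ k * deriv u₂ k + u₃ k * deriv u₃ k) / 2) ^ 2 := by ring
    obtain ⟨d, hd⟩ := key hSa a₀ hSnn hpos hid
    have hSeven : ∀ k, S (-k) = S k := by
      intro k
      simp only [hSdef, hodd₁ k, hodd₂ k, heven₃ k]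
      ring
    have hdzero : d = 0 := by
      push_neg at hu₀
      obtain ⟨k₂, hk₂⟩ := hu₀
      have h1 := hd k₂
      have h2 := hd (-k₂)
      rw [hSeven, hodd₀] at h2
      have : 4 * d * u₀ k₂ = 0 := by nlinarith [h1, h2]
      rcases mul_eq_zero.1 this with h | h
      · rcases mul_eq_zero.1 h with h' | h'
        · norm_num at h'
        · exact h'
      · exact absurd h hk₂
    intro k
    have := hd k
    rw [hdzero] at this
    simpa using this.symm
  · intro h k
    have e : (fun x => u₀ x ^ 2) = S := funext h
    have d0 : HasDerivAt (fun x => u₀ x ^ 2) (2 * u₀ k ^ 1 * deriv u₀ k) k := by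
      simpa using ((a₀ k).differentiableAt.hasDerivAt.fun_pow 2)
    rw [e] at d0
    have hDS := d0.deriv
    rw [hderivS k] at hDS
    have huu : u₁ k * deriv u₁ k + u₂ k * deriv u₂ k + u₃ k * deriv u₃ k
        = u₀ k * deriv u₀ k := by nlinarith [hDS]
    rw [huu, ← h k]
    ring
end

section
/- Let e : ℝ → ℝ be continuous on [−π, π] with e(−π) = e(π), let S ⊆ (−π, π) be a finite set, and let w : ℝ → ℝ be a measurable function, bounded on (−π, π) \ S, such that for every k ∈ (−π, π) \ S the function e is differentiable at k with derivative e'(k) = w(k). Let ρ : ℝ → ℝ be bounded and Borel measurable and let β ∈ ℝ. Then ∫_{−π}^{π} e(k)·w(k)·ρ(β·e(k)) dk = 0. -/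
open MeasureTheory Real
open scoped NNReal ENNReal

lemma stmt18_aux_integrable {μ : Measure ℝ} [IsFiniteMeasure μ] {F : ℝ → ℝ}
    (hm : AEStronglyMeasurable F μ) {C : ℝ} (h : ∀ᵐ k ∂μ, |F k| ≤ C) :
    Integrable F μ :=
  ⟨hm, HasFiniteIntegral.of_bounded (C := C) (by simpa [Real.norm_eq_abs] using h)⟩

lemma stmt18_ofReal_max (x : ℝ) : ENNReal.ofReal (max x 0) = ENNReal.ofReal x := by
  rcases le_total x 0 with h | h
  · simp [max_eq_right h, ENNReal.ofReal_of_nonpos h]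
  · simp [max_eq_left h]

lemma stmt18_lemA (e w : ℝ → ℝ) (S : Set ℝ) {g : ℝ → ℝ} (hg : Continuous g)
    (he_cont : ContinuousOn e (Set.Icc (-π) π))
    (he_per : e (-π) = e π)
    (hS_fin : S.Finite)
    (hw_meas : Measurable w)
    (hw_bdd : ∃ C : ℝ, ∀ k ∈ Set.Ioo (-π) π \ S, |w k| ≤ C)
    (hderiv : ∀ k ∈ Set.Ioo (-π) π \ S, HasDerivAt e (w k) k) :
    ∫ k in (-π)..π, g (e k) * w k = 0 := by
  have hab : (-π : ℝ) ≤ π := by linarith [Real.pi_pos]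
  obtain ⟨C, hC⟩ := hw_bdd
  set P : ℝ → ℝ := fun y => ∫ t in (e (-π))..y, g t with hPdef
  have hPd : ∀ y, HasDerivAt P (g y) y := by
    intro y
    exact intervalIntegral.integral_hasDerivAt_right (hg.intervalIntegrable _ _)
      (hg.stronglyMeasurable.stronglyMeasurableAtFilter) hg.continuousAt
  have hPcont : Continuous P := by
    rw [continuous_iff_continuousAt]; exact fun y => (hPd y).continuousAt
  obtain ⟨Mg, hMg⟩ := isCompact_Icc.exists_bound_of_continuousOn
    (hg.comp_continuousOn he_cont)
  have hMg0 : 0 ≤ Mg := le_trans (norm_nonneg _) (hMg (-π) (by constructor <;> linarith))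
  have Hi : IntervalIntegrable (fun k => g (e k) * w k) volume (-π) π := by
    rw [intervalIntegrable_iff_integrableOn_Ioc_of_le hab]
    have he_meas : AEMeasurable e (volume.restrict (Set.Ioc (-π) π)) :=
      (he_cont.mono Set.Ioc_subset_Icc_self).aemeasurable measurableSet_Ioc
    refine stmt18_aux_integrable
      (((hg.measurable.comp_aemeasurable he_meas).mul hw_meas.aemeasurable).aestronglyMeasurable)
      (C := Mg * C) ?_
    have hSnull : (volume.restrict (Set.Ioc (-π) π)) S = 0 :=
      le_antisymm (le_trans (Measure.restrict_le_self _)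
        (le_of_eq (hS_fin.measure_zero _))) (zero_le)
    have hpinull : (volume.restrict (Set.Ioc (-π) π)) {π} = 0 :=
      le_antisymm (le_trans (Measure.restrict_le_self _)
        (le_of_eq (Real.volume_singleton))) (zero_le)
    filter_upwards [ae_restrict_mem measurableSet_Ioc,
      (measure_eq_zero_iff_ae_notMem).mp hSnull, (measure_eq_zero_iff_ae_notMem).mp hpinull]
      with k hk hkS hkpi
    have hkI : k ∈ Set.Ioo (-π) π \ S := by
      refine ⟨⟨hk.1, lt_of_le_of_ne hk.2 ?_⟩, hkS⟩
      simpa using hkpi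
    have h1 : |g (e k)| ≤ Mg := by
      simpa [Real.norm_eq_abs] using hMg k (Set.Ioc_subset_Icc_self hk)
    calc |g (e k) * w k| = |g (e k)| * |w k| := abs_mul _ _
      _ ≤ Mg * C := mul_le_mul h1 (hC k hkI) (abs_nonneg _) hMg0
  have key := MeasureTheory.integral_eq_of_hasDerivAt_off_countable_of_le
    (f := P ∘ e) (f' := fun k => g (e k) * w k) hab hS_fin.countable
    (hPcont.comp_continuousOn he_cont)
    (fun x hx => (hPd (e x)).comp x (hderiv x hx)) Hi
  rw [key]
  simp [P, ← he_per]

/-- Let `e : ℝ → ℝ` be continuous on `[−π, π]` with `e(−π) = e(π)`, let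
`S ⊆ (−π, π)` be a finite set, and let `w : ℝ → ℝ` be a measurable function, bounded on
`(−π, π) \ S`, such that for every `k ∈ (−π, π) \ S` the function `e` is differentiable at `k`
with derivative `e'(k) = w(k)`.  Let `ρ : ℝ → ℝ` be bounded and Borel measurable and let
`β ∈ ℝ`.  Then `∫_{−π}^{π} e(k)·w(k)·ρ(β·e(k)) dk = 0`. -/
theorem stmt_18 (e w ρ : ℝ → ℝ) (S : Set ℝ) (β : ℝ)
    (he_cont : ContinuousOn e (Set.Icc (-π) π))
    (he_per : e (-π) = e π)
    (hS_fin : S.Finite) (hS_sub : S ⊆ Set.Ioo (-π) π)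
    (hw_meas : Measurable w)
    (hw_bdd : ∃ C : ℝ, ∀ k ∈ Set.Ioo (-π) π \ S, |w k| ≤ C)
    (hderiv : ∀ k ∈ Set.Ioo (-π) π \ S, HasDerivAt e (w k) k)
    (hρ_meas : Measurable ρ)
    (hρ_bdd : ∃ C : ℝ, ∀ x : ℝ, |ρ x| ≤ C) :
    ∫ k in (-π)..π, e k * w k * ρ (β * e k) = 0 := by
  have hab : (-π : ℝ) ≤ π := by linarith [Real.pi_pos]
  obtain ⟨C, hC⟩ := hw_bdd
  obtain ⟨Cρ, hCρ⟩ := hρ_bdd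
  set μ : Measure ℝ := volume.restrict (Set.Ioo (-π) π) with hμdef
  haveI : IsFiniteMeasure μ := by
    constructor
    rw [Measure.restrict_apply_univ, Real.volume_Ioo]
    exact ENNReal.ofReal_lt_top
  have he_meas : AEMeasurable e μ :=
    (he_cont.mono Set.Ioo_subset_Icc_self).aemeasurable measurableSet_Ioo
  have hSnull : μ S = 0 :=
    le_antisymm (le_trans (Measure.restrict_le_self _)
      (le_of_eq (hS_fin.measure_zero _))) (zero_le)
  have haemem : ∀ᵐ k ∂μ, k ∈ Set.Ioo (-π) π \ S := by
    filter_upwards [ae_restrict_mem measurableSet_Ioo, (measure_eq_zero_iff_ae_notMem).mp hSnull]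
      with k h1 h2
    exact ⟨h1, h2⟩
  have haew : ∀ᵐ k ∂μ, |w k| ≤ C := haemem.mono fun k hk => hC k hk
  -- positive and negative part densities
  set wp : ℝ → ℝ≥0 := fun k => (w k).toNNReal with hwpdef
  set wm : ℝ → ℝ≥0 := fun k => (-(w k)).toNNReal with hwmdef
  have hwp_meas : Measurable wp := measurable_real_toNNReal.comp hw_meas
  have hwm_meas : Measurable wm := measurable_real_toNNReal.comp hw_meas.neg
  set μp : Measure ℝ := μ.withDensity (fun k => (wp k : ℝ≥0∞)) with hμpdef
  set μm : Measure ℝ := μ.withDensity (fun k => (wm k : ℝ≥0∞)) with hμmdef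
  have hfin : ∀ (v : ℝ → ℝ≥0), (∀ᵐ k ∂μ, (v k : ℝ) ≤ C) →
      IsFiniteMeasure (μ.withDensity (fun k => (v k : ℝ≥0∞))) := by
    intro v hv
    constructor
    rw [MeasureTheory.withDensity_apply _ MeasurableSet.univ, Measure.restrict_univ]
    calc ∫⁻ k, (v k : ℝ≥0∞) ∂μ ≤ ∫⁻ _, ENNReal.ofReal C ∂μ := by
          refine lintegral_mono_ae (hv.mono fun k hk => ?_)
          rw [← ENNReal.ofReal_coe_nnreal]
          exact ENNReal.ofReal_le_ofReal hk
      _ < ⊤ := by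
          rw [lintegral_const]
          exact ENNReal.mul_lt_top ENNReal.ofReal_lt_top (measure_lt_top μ _)
  have haewp : ∀ᵐ k ∂μ, (wp k : ℝ) ≤ C := by
    filter_upwards [haew] with k hk
    rw [hwpdef]
    simp only [Real.coe_toNNReal']
    exact le_trans (max_le (le_trans (le_abs_self _) hk)
      (le_trans (abs_nonneg (w k)) hk)) le_rfl
  have haewm : ∀ᵐ k ∂μ, (wm k : ℝ) ≤ C := by
    filter_upwards [haew] with k hk
    rw [hwmdef]
    simp only [Real.coe_toNNReal']
    refine max_le (le_trans (neg_le_abs _) hk) (le_trans (abs_nonneg (w k)) hk)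
  haveI hfinp : IsFiniteMeasure μp := hfin wp haewp
  haveI hfinm : IsFiniteMeasure μm := hfin wm haewm
  have he_measp : AEMeasurable e μp := he_meas.mono_ac (withDensity_absolutelyContinuous _ _)
  have he_measm : AEMeasurable e μm := he_meas.mono_ac (withDensity_absolutelyContinuous _ _)
  set νp : Measure ℝ := Measure.map e μp with hνpdef
  set νm : Measure ℝ := Measure.map e μm with hνmdef
  haveI : IsFiniteMeasure νp := by
    constructor
    rw [hνpdef, Measure.map_apply_of_aemeasurable he_measp MeasurableSet.univ, Set.preimage_univ]
    exact measure_lt_top μp _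
  haveI : IsFiniteMeasure νm := by
    constructor
    rw [hνmdef, Measure.map_apply_of_aemeasurable he_measm MeasurableSet.univ, Set.preimage_univ]
    exact measure_lt_top μm _
  -- interval integral to μ-integral conversion
  have hconv : ∀ F : ℝ → ℝ, (∫ k in (-π)..π, F k) = ∫ k, F k ∂μ := by
    intro F
    rw [hμdef, intervalIntegral.integral_of_le hab]
    exact (setIntegral_congr_set (MeasureTheory.Ioo_ae_eq_Ioc (a := -π) (b := π))).symm
  -- the two pushforward measures agree
  have hν : νp = νm := by
    apply MeasureTheory.ext_of_forall_lintegral_eq_of_IsFiniteMeasure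
    intro f
    have hgc : Continuous (fun y => ((f y : ℝ≥0) : ℝ)) := NNReal.continuous_coe.comp f.continuous
    have hA : ∫ k, ((f (e k) : ℝ≥0) : ℝ) * w k ∂μ = 0 := by
      rw [← hconv]
      exact stmt18_lemA e w S hgc he_cont he_per hS_fin hw_meas ⟨C, hC⟩ hderiv
    -- bound for f ∘ e
    obtain ⟨Mf, hMf⟩ := isCompact_Icc.exists_bound_of_continuousOn
      (hgc.comp_continuousOn he_cont)
    have hMf0 : 0 ≤ Mf := le_trans (norm_nonneg _) (hMf (-π) (by constructor <;> linarith))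
    have haesm : AEStronglyMeasurable (fun k => ((f (e k) : ℝ≥0) : ℝ)) μ :=
      (hgc.measurable.comp_aemeasurable he_meas).aestronglyMeasurable
    have haef : ∀ᵐ k ∂μ, |((f (e k) : ℝ≥0) : ℝ)| ≤ Mf := by
      filter_upwards [ae_restrict_mem measurableSet_Ioo] with k hk
      simpa [Real.norm_eq_abs] using hMf k (Set.Ioo_subset_Icc_self hk)
    have hintp : Integrable (fun k => (wp k : ℝ) * ((f (e k) : ℝ≥0) : ℝ)) μ := by
      refine stmt18_aux_integrable
        (((hwp_meas.coe_nnreal_real).aemeasurable.mul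
          (hgc.measurable.comp_aemeasurable he_meas)).aestronglyMeasurable) (C := C * Mf) ?_
      filter_upwards [haewp, haef] with k h1 h2
      rw [abs_mul]
      exact mul_le_mul (by rwa [abs_of_nonneg (wp k).coe_nonneg]) h2 (abs_nonneg _)
        (le_trans (wp k).coe_nonneg h1)
    have hintm : Integrable (fun k => (wm k : ℝ) * ((f (e k) : ℝ≥0) : ℝ)) μ := by
      refine stmt18_aux_integrable
        (((hwm_meas.coe_nnreal_real).aemeasurable.mul
          (hgc.measurable.comp_aemeasurable he_meas)).aestronglyMeasurable) (C := C * Mf) ?_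
      filter_upwards [haewm, haef] with k h1 h2
      rw [abs_mul]
      exact mul_le_mul (by rwa [abs_of_nonneg (wm k).coe_nonneg]) h2 (abs_nonneg _)
        (le_trans (wm k).coe_nonneg h1)
    have hsub : ∫ k, (wp k : ℝ) * ((f (e k) : ℝ≥0) : ℝ) ∂μ
        = ∫ k, (wm k : ℝ) * ((f (e k) : ℝ≥0) : ℝ) ∂μ := by
      have := integral_sub hintp hintm
      have heq : (fun k => (wp k : ℝ) * ((f (e k) : ℝ≥0) : ℝ)
          - (wm k : ℝ) * ((f (e k) : ℝ≥0) : ℝ))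
          = fun k => ((f (e k) : ℝ≥0) : ℝ) * w k := by
        funext k
        rw [hwpdef, hwmdef]
        simp only [Real.coe_toNNReal']
        rw [← sub_mul, max_zero_sub_eq_self]
        ring
      rw [heq, hA] at this
      linarith [this]
    -- now the lintegral computation
    have hlint : ∀ (v : ℝ → ℝ≥0) (hv : Measurable v),
        Integrable (fun k => (v k : ℝ) * ((f (e k) : ℝ≥0) : ℝ)) μ →
        ∫⁻ x, (f x : ℝ≥0∞) ∂(Measure.map e (μ.withDensity (fun k => (v k : ℝ≥0∞))))
          = ENNReal.ofReal (∫ k, (v k : ℝ) * ((f (e k) : ℝ≥0) : ℝ) ∂μ) := by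
      intro v hv hint
      have hem : AEMeasurable e (μ.withDensity (fun k => (v k : ℝ≥0∞))) :=
        he_meas.mono_ac (withDensity_absolutelyContinuous _ _)
      have hfm : AEMeasurable (fun x : ℝ => ((f x : ℝ≥0) : ℝ≥0∞))
          (Measure.map e (μ.withDensity fun k => (v k : ℝ≥0∞))) :=
        (measurable_coe_nnreal_ennreal.comp f.continuous.measurable).aemeasurable
      rw [lintegral_map' hfm hem]
      rw [lintegral_withDensity_eq_lintegral_mul_non_measurable μ hv.coe_nnreal_ennreal
        (ae_of_all _ fun k => ENNReal.coe_lt_top)]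
      rw [ofReal_integral_eq_lintegral_ofReal hint
        (ae_of_all _ fun k => mul_nonneg (v k).coe_nonneg (f (e k)).coe_nonneg)]
      refine lintegral_congr fun k => ?_
      simp only [Pi.mul_apply]
      rw [ENNReal.ofReal_mul (v k).coe_nonneg, ENNReal.ofReal_coe_nnreal,
        ENNReal.ofReal_coe_nnreal]
    rw [hνpdef, hνmdef, hμpdef, hμmdef, hlint wp hwp_meas hintp, hlint wm hwm_meas hintm, hsub]
  -- apply to the bounded measurable function h
  set h : ℝ → ℝ := fun y => y * ρ (β * y) with hhdef
  have hh_meas : Measurable h := measurable_id.mul (hρ_meas.comp (measurable_const_mul β))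
  obtain ⟨Me, hMe⟩ := isCompact_Icc.exists_bound_of_continuousOn he_cont
  have hMe0 : 0 ≤ Me := le_trans (norm_nonneg _) (hMe (-π) (by constructor <;> linarith))
  have hCρ0 : 0 ≤ Cρ := le_trans (abs_nonneg _) (hCρ 0)
  have haeh : ∀ᵐ k ∂μ, |h (e k)| ≤ Me * Cρ := by
    filter_upwards [ae_restrict_mem measurableSet_Ioo] with k hk
    rw [hhdef]
    simp only [abs_mul]
    refine mul_le_mul ?_ (hCρ _) (abs_nonneg _) hMe0
    simpa [Real.norm_eq_abs] using hMe k (Set.Ioo_subset_Icc_self hk)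
  have hintp : Integrable (fun k => (wp k : ℝ) * h (e k)) μ := by
    refine stmt18_aux_integrable
      (((hwp_meas.coe_nnreal_real).aemeasurable.mul
        (hh_meas.comp_aemeasurable he_meas)).aestronglyMeasurable) (C := C * (Me * Cρ)) ?_
    filter_upwards [haewp, haeh] with k h1 h2
    rw [abs_mul]
    exact mul_le_mul (by rwa [abs_of_nonneg (wp k).coe_nonneg]) h2 (abs_nonneg _)
      (le_trans (wp k).coe_nonneg h1)
  have hintm : Integrable (fun k => (wm k : ℝ) * h (e k)) μ := by
    refine stmt18_aux_integrable
      (((hwm_meas.coe_nnreal_real).aemeasurable.mul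
        (hh_meas.comp_aemeasurable he_meas)).aestronglyMeasurable) (C := C * (Me * Cρ)) ?_
    filter_upwards [haewm, haeh] with k h1 h2
    rw [abs_mul]
    exact mul_le_mul (by rwa [abs_of_nonneg (wm k).coe_nonneg]) h2 (abs_nonneg _)
      (le_trans (wm k).coe_nonneg h1)
  have hIp : ∫ y, h y ∂νp = ∫ k, (wp k : ℝ) * h (e k) ∂μ := by
    rw [hνpdef, integral_map he_measp hh_meas.aestronglyMeasurable, hμpdef,
      integral_withDensity_eq_integral_smul hwp_meas]
    refine integral_congr_ae (ae_of_all _ fun k => ?_)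
    simp [NNReal.smul_def]
  have hIm : ∫ y, h y ∂νm = ∫ k, (wm k : ℝ) * h (e k) ∂μ := by
    rw [hνmdef, integral_map he_measm hh_meas.aestronglyMeasurable, hμmdef,
      integral_withDensity_eq_integral_smul hwm_meas]
    refine integral_congr_ae (ae_of_all _ fun k => ?_)
    simp [NNReal.smul_def]
  have hzero : ∫ k, w k * h (e k) ∂μ = 0 := by
    have hdiff := integral_sub hintp hintm
    have heq : (fun k => (wp k : ℝ) * h (e k) - (wm k : ℝ) * h (e k))
        = fun k => w k * h (e k) := by
      funext k
      rw [hwpdef, hwmdef]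
      simp only [Real.coe_toNNReal']
      rw [← sub_mul, max_zero_sub_eq_self]
    rw [heq] at hdiff
    rw [hdiff, ← hIp, ← hIm, hν, sub_self]
  rw [hconv]
  rw [← hzero]
  refine integral_congr_ae (ae_of_all _ fun k => ?_)
  rw [hhdef]
  ring
end

section
/- Let u₀, u₁, u₂ be odd real trigonometric polynomials and u₃ an even real trigonometric polynomial, not all identically zero, and assume: (i) if u₀ is identically zero, then u₁u₁' + u₂u₂' + u₃u₃' is not identically zero; and (ii) if u₀ is not identically zero, then u₀² − (u₁² + u₂² + u₃²) is not identically zero. Define |u|(k) := √(u₁(k)² + u₂(k)² + u₃(k)²), e := u₀ + |u|, and E'(k) := u₀'(k) + (u₁u₁' + u₂u₂' + u₃u₃')(k)/|u|(k) if |u|(k) ≠ 0, E'(k) := u₀'(k) if |u|(k) = 0. Let ρ : ℝ → ℝ be strictly increasing with ρ(x) + ρ(−x) = 1 for all x ∈ ℝ, and let β_L, β_R ∈ ℝ with β_L < β_R. Then J := (1/(4π))·∫_{−π}^{π} |e(k)·E'(k)|·(ρ(β_R·|e(k)|) − ρ(β_L·|e(k)|)) dk is strictly positive. -/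
open MeasureTheory Real

lemma analyticOnNhd_ccos : AnalyticOnNhd ℂ Complex.cos Set.univ := by
  intro z _
  have h : AnalyticAt ℂ (fun z : ℂ =>
      (Complex.exp (z * Complex.I) + Complex.exp (-z * Complex.I)) / 2) z := by
    apply AnalyticAt.div
    · exact (analyticAt_cexp.comp (analyticAt_id.mul analyticAt_const)).add
        (analyticAt_cexp.comp (analyticAt_id.neg.mul analyticAt_const))
    · exact analyticAt_const
    · norm_num
  exact h

lemma analyticOnNhd_csin : AnalyticOnNhd ℂ Complex.sin Set.univ := by
  intro z _
  have h : AnalyticAt ℂ (fun z : ℂ =>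
      (Complex.exp (-z * Complex.I) - Complex.exp (z * Complex.I)) * Complex.I / 2) z := by
    apply AnalyticAt.div
    · exact (((analyticAt_cexp.comp (analyticAt_id.neg.mul analyticAt_const)).sub
        (analyticAt_cexp.comp (analyticAt_id.mul analyticAt_const))).mul analyticAt_const)
    · exact analyticAt_const
    · norm_num
  exact h

lemma analyticOnNhd_rcos : AnalyticOnNhd ℝ Real.cos Set.univ := by
  have heq : Real.cos = fun t : ℝ => Complex.reCLM (Complex.cos (Complex.ofRealCLM t)) := by
    funext t
    simp [Complex.cos_ofReal_re]
  rw [heq]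
  intro x _
  have h1 : AnalyticAt ℝ Complex.cos ((Complex.ofRealCLM x : ℂ)) :=
    (analyticOnNhd_ccos _ (Set.mem_univ _)).restrictScalars
  exact (Complex.reCLM.analyticAt _).comp (h1.comp (Complex.ofRealCLM.analyticAt x))

lemma analyticOnNhd_rsin : AnalyticOnNhd ℝ Real.sin Set.univ := by
  have heq : Real.sin = fun t : ℝ => Complex.reCLM (Complex.sin (Complex.ofRealCLM t)) := by
    funext t
    simp [Complex.sin_ofReal_re]
  rw [heq]
  intro x _
  have h1 : AnalyticAt ℝ Complex.sin ((Complex.ofRealCLM x : ℂ)) :=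
    (analyticOnNhd_csin _ (Set.mem_univ _)).restrictScalars
  exact (Complex.reCLM.analyticAt _).comp (h1.comp (Complex.ofRealCLM.analyticAt x))

lemma eq_zero_of_eventually_zero {f : ℝ → ℝ} (hf : AnalyticOnNhd ℝ f Set.univ) {z : ℝ}
    (h : ∀ᶠ x in nhds z, f x = 0) : ∀ x, f x = 0 := by
  have := hf.eqOn_zero_of_preconnected_of_eventuallyEq_zero isPreconnected_univ
    (Set.mem_univ z) h
  exact fun x => this (Set.mem_univ x)

lemma eq_zero_of_zero_on_Ioo {f : ℝ → ℝ} (hf : AnalyticOnNhd ℝ f Set.univ) {a b : ℝ}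
    (hab : a < b) (h : ∀ x ∈ Set.Ioo a b, f x = 0) : ∀ x, f x = 0 :=
  eq_zero_of_eventually_zero hf (z := (a + b) / 2)
    (Filter.eventually_of_mem
      (isOpen_Ioo.mem_nhds ⟨by linarith, by linarith⟩) h)

lemma zero_of_mul_zero {f g : ℝ → ℝ} (hf : AnalyticOnNhd ℝ f Set.univ)
    (hg : AnalyticOnNhd ℝ g Set.univ) (h : ∀ x, f x * g x = 0)
    (hf0 : ¬ ∀ x, f x = 0) : ∀ x, g x = 0 := by
  push_neg at hf0
  obtain ⟨x₀, hx₀⟩ := hf0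
  have hev : ∀ᶠ x in nhds x₀, f x ≠ 0 :=
    (hf x₀ (Set.mem_univ _)).continuousAt.eventually_ne hx₀
  exact eq_zero_of_eventually_zero hg
    (hev.mono fun x hx => (mul_eq_zero.mp (h x)).resolve_left hx)

lemma deriv_even_of_odd {u : ℝ → ℝ} (hu : Differentiable ℝ u)
    (h : ∀ x, u (-x) = -u x) (k : ℝ) : deriv u (-k) = deriv u k := by
  have h1 : HasDerivAt (fun x : ℝ => u (-x)) (deriv u (-k) * (-1)) k :=
    ((hu (-k)).hasDerivAt).comp k (hasDerivAt_neg k)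
  have h3 : (fun x : ℝ => u (-x)) = fun x => -u x := funext h
  rw [h3] at h1
  have h2 : HasDerivAt (fun x : ℝ => -u x) (-(deriv u k)) k := ((hu k).hasDerivAt).neg
  have := h1.unique h2
  linarith

lemma deriv_odd_of_even {u : ℝ → ℝ} (hu : Differentiable ℝ u)
    (h : ∀ x, u (-x) = u x) (k : ℝ) : deriv u (-k) = -(deriv u k) := by
  have h1 : HasDerivAt (fun x : ℝ => u (-x)) (deriv u (-k) * (-1)) k :=
    ((hu (-k)).hasDerivAt).comp k (hasDerivAt_neg k)
  have h3 : (fun x : ℝ => u (-x)) = u := funext h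
  rw [h3] at h1
  have h2 : HasDerivAt u (deriv u k) k := (hu k).hasDerivAt
  have := h1.unique h2
  linarith


lemma IsRealTrigPoly.analyticOnNhd {f : ℝ → ℝ} (hf : IsRealTrigPoly f) :
    AnalyticOnNhd ℝ f Set.univ := by
  obtain ⟨N, a, b, h⟩ := hf
  have hfe : f = fun k => a 0 + ∑ n ∈ Finset.Icc 1 N,
      (a n * Real.cos (n * k) + b n * Real.sin (n * k)) := funext h
  rw [hfe]
  intro x _
  apply analyticAt_const.add
  apply Finset.analyticAt_fun_sum
  intro n _
  have hc : AnalyticAt ℝ (fun k : ℝ => Real.cos ((n : ℝ) * k)) x :=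
    (analyticOnNhd_rcos _ (Set.mem_univ _)).comp (analyticAt_const.mul analyticAt_id)
  have hs : AnalyticAt ℝ (fun k : ℝ => Real.sin ((n : ℝ) * k)) x :=
    (analyticOnNhd_rsin _ (Set.mem_univ _)).comp (analyticAt_const.mul analyticAt_id)
  exact (analyticAt_const.mul hc).add (analyticAt_const.mul hs)


/-- Strict positivity of the R/L mover heat flux.  Let `u₀, u₁, u₂` be odd
and `u₃` an even real trigonometric polynomial, not all identically zero, and assume (i) if
`u₀ ≡ 0` then `uu' := u₁u₁' + u₂u₂' + u₃u₃'` is not identically zero, and (ii) if `u₀ ≢ 0`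
then `u₀² − (u₁² + u₂² + u₃²)` is not identically zero.  Define `|u| := √(u₁²+u₂²+u₃²)`,
`e := u₀ + |u|`, and `E' := u₀' + uu'/|u|` where `|u| ≠ 0`, `E' := u₀'` where `|u| = 0`.  Let
`ρ : ℝ → ℝ` be strictly increasing with `ρ(x) + ρ(−x) = 1`, and let `β_L < β_R`.  Then
`J := (1/(4π))·∫_{−π}^{π} |e(k)·E'(k)|·(ρ(β_R·|e(k)|) − ρ(β_L·|e(k)|)) dk > 0`. -/
theorem stmt_19 (u₀ u₁ u₂ u₃ : ℝ → ℝ)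
    (h₀ : IsRealTrigPoly u₀) (h₁ : IsRealTrigPoly u₁)
    (h₂ : IsRealTrigPoly u₂) (h₃ : IsRealTrigPoly u₃)
    (hodd₀ : ∀ k : ℝ, u₀ (-k) = -u₀ k)
    (hodd₁ : ∀ k : ℝ, u₁ (-k) = -u₁ k)
    (hodd₂ : ∀ k : ℝ, u₂ (-k) = -u₂ k)
    (heven₃ : ∀ k : ℝ, u₃ (-k) = u₃ k)
    (hnz : ¬ ∀ k : ℝ, u₀ k = 0 ∧ u₁ k = 0 ∧ u₂ k = 0 ∧ u₃ k = 0)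
    (hyp_i : (∀ k : ℝ, u₀ k = 0) →
      ¬ ∀ k : ℝ, u₁ k * deriv u₁ k + u₂ k * deriv u₂ k + u₃ k * deriv u₃ k = 0)
    (hyp_ii : (¬ ∀ k : ℝ, u₀ k = 0) →
      ¬ ∀ k : ℝ, u₀ k ^ 2 - (u₁ k ^ 2 + u₂ k ^ 2 + u₃ k ^ 2) = 0)
    (normu e E' : ℝ → ℝ)
    (hnormu : ∀ k : ℝ, normu k = Real.sqrt (u₁ k ^ 2 + u₂ k ^ 2 + u₃ k ^ 2))
    (he : ∀ k : ℝ, e k = u₀ k + normu k)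
    (hE' : ∀ k : ℝ, E' k =
      if normu k = 0 then deriv u₀ k
      else deriv u₀ k +
        (u₁ k * deriv u₁ k + u₂ k * deriv u₂ k + u₃ k * deriv u₃ k) / normu k)
    (ρ : ℝ → ℝ) (hρ_mono : StrictMono ρ) (hρ_fermi : ∀ x : ℝ, ρ x + ρ (-x) = 1)
    (βL βR : ℝ) (hβ : βL < βR) :
    0 < (1 / (4 * π)) *
      ∫ k in (-π)..π, |e k * E' k| * (ρ (βR * |e k|) - ρ (βL * |e k|)) := by
  -- basic facts about π
  have pi_pos := Real.pi_pos
  have hππ : (-π) ≤ π := by linarith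
  -- analyticity of the trig polynomials and their derivatives
  have A0 : AnalyticOnNhd ℝ u₀ Set.univ := h₀.analyticOnNhd
  have A1 : AnalyticOnNhd ℝ u₁ Set.univ := h₁.analyticOnNhd
  have A2 : AnalyticOnNhd ℝ u₂ Set.univ := h₂.analyticOnNhd
  have A3 : AnalyticOnNhd ℝ u₃ Set.univ := h₃.analyticOnNhd
  have A0' : AnalyticOnNhd ℝ (deriv u₀) Set.univ := A0.deriv
  have A1' : AnalyticOnNhd ℝ (deriv u₁) Set.univ := A1.deriv
  have A2' : AnalyticOnNhd ℝ (deriv u₂) Set.univ := A2.deriv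
  have A3' : AnalyticOnNhd ℝ (deriv u₃) Set.univ := A3.deriv
  have hd0 : Differentiable ℝ u₀ := fun x => (A0 x (Set.mem_univ x)).differentiableAt
  have hd1 : Differentiable ℝ u₁ := fun x => (A1 x (Set.mem_univ x)).differentiableAt
  have hd2 : Differentiable ℝ u₂ := fun x => (A2 x (Set.mem_univ x)).differentiableAt
  have hd3 : Differentiable ℝ u₃ := fun x => (A3 x (Set.mem_univ x)).differentiableAt
  -- abbreviations
  obtain ⟨q, hq⟩ : ∃ q : ℝ → ℝ, ∀ k, q k = u₁ k ^ 2 + u₂ k ^ 2 + u₃ k ^ 2 :=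
    ⟨_, fun k => rfl⟩
  obtain ⟨uu, huu⟩ : ∃ uu : ℝ → ℝ,
      ∀ k, uu k = u₁ k * deriv u₁ k + u₂ k * deriv u₂ k + u₃ k * deriv u₃ k :=
    ⟨_, fun k => rfl⟩
  obtain ⟨P, hP⟩ : ∃ P : ℝ → ℝ, ∀ k, P k = u₀ k ^ 2 - q k := ⟨_, fun k => rfl⟩
  have Aq : AnalyticOnNhd ℝ q Set.univ := by
    have h2 : q = fun x => u₁ x ^ 2 + u₂ x ^ 2 + u₃ x ^ 2 := funext hq
    rw [h2]
    exact fun x hx => (((A1 x hx).pow 2).add ((A2 x hx).pow 2)).add ((A3 x hx).pow 2)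
  have Auu : AnalyticOnNhd ℝ uu Set.univ := by
    have h2 : uu = fun x => u₁ x * deriv u₁ x + u₂ x * deriv u₂ x + u₃ x * deriv u₃ x :=
      funext huu
    rw [h2]
    exact fun x hx => (((A1 x hx).mul (A1' x hx)).add ((A2 x hx).mul (A2' x hx))).add
      ((A3 x hx).mul (A3' x hx))
  have AP : AnalyticOnNhd ℝ P Set.univ := by
    have h2 : P = fun x => u₀ x ^ 2 - q x := funext hP
    rw [h2]
    exact fun x hx => ((A0 x hx).pow 2).sub (Aq x hx)
  -- basic facts about q and normu
  have hqnn : ∀ k, 0 ≤ q k := by intro k; rw [hq]; positivity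
  have hnormuq : ∀ k, normu k = Real.sqrt (q k) := fun k => by rw [hnormu, hq]
  have hnormu_ne : ∀ k, q k ≠ 0 → normu k ≠ 0 := fun k hk => by
    rw [hnormuq]
    exact (Real.sqrt_pos.mpr (lt_of_le_of_ne (hqnn k) (Ne.symm hk))).ne'
  -- continuity
  have hcu0 : Continuous u₀ := continuous_iff_continuousAt.mpr
    fun x => (A0 x (Set.mem_univ x)).continuousAt
  have hcu1 : Continuous u₁ := continuous_iff_continuousAt.mpr
    fun x => (A1 x (Set.mem_univ x)).continuousAt
  have hcu2 : Continuous u₂ := continuous_iff_continuousAt.mpr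
    fun x => (A2 x (Set.mem_univ x)).continuousAt
  have hcu3 : Continuous u₃ := continuous_iff_continuousAt.mpr
    fun x => (A3 x (Set.mem_univ x)).continuousAt
  have c0 : Continuous (deriv u₀) := continuous_iff_continuousAt.mpr
    fun x => (A0' x (Set.mem_univ x)).continuousAt
  have c1 : Continuous (deriv u₁) := continuous_iff_continuousAt.mpr
    fun x => (A1' x (Set.mem_univ x)).continuousAt
  have c2 : Continuous (deriv u₂) := continuous_iff_continuousAt.mpr
    fun x => (A2' x (Set.mem_univ x)).continuousAt
  have c3 : Continuous (deriv u₃) := continuous_iff_continuousAt.mpr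
    fun x => (A3' x (Set.mem_univ x)).continuousAt
  have hcq : Continuous q := by
    have h2 : q = fun x => u₁ x ^ 2 + u₂ x ^ 2 + u₃ x ^ 2 := funext hq
    rw [h2]; exact ((hcu1.pow 2).add (hcu2.pow 2)).add (hcu3.pow 2)
  have hcuu : Continuous uu := by
    have h2 : uu = fun x => u₁ x * deriv u₁ x + u₂ x * deriv u₂ x + u₃ x * deriv u₃ x :=
      funext huu
    rw [h2]; exact ((hcu1.mul c1).add (hcu2.mul c2)).add (hcu3.mul c3)
  have hcn : Continuous normu := by
    have h2 : normu = fun x => Real.sqrt (q x) := funext hnormuq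
    rw [h2]; exact Real.continuous_sqrt.comp hcq
  have hce : Continuous e := by
    have h2 : e = fun x => u₀ x + normu x := funext he
    rw [h2]; exact hcu0.add hcn
  -- parity
  have hqev : ∀ k, q (-k) = q k := fun k => by
    rw [hq, hq, hodd₁, hodd₂, heven₃]; ring
  have hnev : ∀ k, normu (-k) = normu k := fun k => by rw [hnormuq, hnormuq, hqev]
  have huuodd : ∀ k, uu (-k) = -uu k := fun k => by
    rw [huu, huu, hodd₁, hodd₂, heven₃, deriv_even_of_odd hd1 hodd₁,
      deriv_even_of_odd hd2 hodd₂, deriv_odd_of_even hd3 heven₃]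
    ring
  -- derivatives
  have hq'At : ∀ k, HasDerivAt q (2 * uu k) k := by
    intro k
    have h1 := (((hd1 k).hasDerivAt.pow 2).add ((hd2 k).hasDerivAt.pow 2)).add
      ((hd3 k).hasDerivAt.pow 2)
    have h2 : q = fun x => u₁ x ^ 2 + u₂ x ^ 2 + u₃ x ^ 2 := funext hq
    rw [h2]
    exact h1.congr_deriv (by rw [huu]; push_cast; ring)
  have hnAt : ∀ k, q k ≠ 0 → HasDerivAt normu (uu k / normu k) k := by
    intro k hk
    have hsne : Real.sqrt (q k) ≠ 0 :=
      (Real.sqrt_pos.mpr (lt_of_le_of_ne (hqnn k) (Ne.symm hk))).ne'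
    have hs := (Real.hasDerivAt_sqrt hk).comp k (hq'At k)
    have h2 : normu = fun x => Real.sqrt (q x) := funext hnormuq
    rw [h2]
    refine hs.congr_deriv ?_
    show 1 / (2 * Real.sqrt (q k)) * (2 * uu k) = uu k / Real.sqrt (q k)
    field_simp
  have heAt : ∀ k, q k ≠ 0 → HasDerivAt e (E' k) k := by
    intro k hk
    have h1 : HasDerivAt e (deriv u₀ k + uu k / normu k) k := by
      have h3 := ((hd0 k).hasDerivAt).add (hnAt k hk)
      have h2 : e = fun x => u₀ x + normu x := funext he
      rw [h2]; exact h3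
    rw [hE' k, if_neg (hnormu_ne k hk), ← huu k]
    exact h1
  have htAt : ∀ k, q k ≠ 0 →
      HasDerivAt (fun x => u₀ x - normu x) (deriv u₀ k - uu k / normu k) k :=
    fun k hk => ((hd0 k).hasDerivAt).sub (hnAt k hk)
  have hPdAt : ∀ k, HasDerivAt P (2 * u₀ k * deriv u₀ k - 2 * uu k) k := by
    intro k
    have h1 := ((hd0 k).hasDerivAt.pow 2).sub (hq'At k)
    have h2 : P = fun x => u₀ x ^ 2 - q x := funext hP
    rw [h2]
    exact h1.congr_deriv (by push_cast; ring)
  have hPfact : ∀ k, P k = e k * (u₀ k - normu k) := by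
    intro k
    have hs : normu k ^ 2 = q k := by rw [hnormuq k]; exact Real.sq_sqrt (hqnn k)
    rw [hP k, he k]
    linear_combination hs
  -- how to produce a good neighborhood from a good point
  have hkey_of : ∀ k₀, k₀ ∈ Set.Ioo (-π) π → q k₀ ≠ 0 → e k₀ * E' k₀ ≠ 0 →
      ∃ c ∈ Set.Ioo (-π) π, {k | e k * E' k ≠ 0} ∈ nhds c := by
    intro k₀ hk₀ hq0 hne
    refine ⟨k₀, hk₀, ?_⟩
    have hn0 : normu k₀ ≠ 0 := hnormu_ne k₀ hq0
    have hφc : ContinuousAt (fun k => e k * (deriv u₀ k + uu k / normu k)) k₀ :=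
      (hce.continuousAt).mul ((c0.continuousAt).add
        (ContinuousAt.div (hcuu.continuousAt) (hcn.continuousAt) hn0))
    have hφk₀ : e k₀ * (deriv u₀ k₀ + uu k₀ / normu k₀) ≠ 0 := by
      rw [huu k₀]
      rw [hE' k₀, if_neg hn0] at hne
      exact hne
    have hev1 : ∀ᶠ k in nhds k₀, normu k ≠ 0 := hcn.continuousAt.eventually_ne hn0
    have hev2 : ∀ᶠ k in nhds k₀, e k * (deriv u₀ k + uu k / normu k) ≠ 0 :=
      hφc.eventually_ne hφk₀
    have hfin : ∀ᶠ k in nhds k₀, e k * E' k ≠ 0 := by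
      filter_upwards [hev1, hev2] with k hk1 hk2
      rw [hE' k, if_neg hk1, ← huu k]
      exact hk2
    exact hfin
  -- main existence statement
  suffices hkey : ∃ c ∈ Set.Ioo (-π) π, {k | e k * E' k ≠ 0} ∈ nhds c by
    obtain ⟨k₀, hk₀, hnhds⟩ := hkey
    set g : ℝ → ℝ := fun k => |e k * E' k| * (ρ (βR * |e k|) - ρ (βL * |e k|)) with hgdef
    have hg0 : ∀ k, 0 ≤ g k := by
      intro k
      apply mul_nonneg (abs_nonneg _)
      exact sub_nonneg.mpr (hρ_mono.monotone
        (mul_le_mul_of_nonneg_right hβ.le (abs_nonneg _)))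
    have hmd0 : Measurable (deriv u₀) := c0.measurable
    have hmE' : Measurable E' := by
      have hEfun : E' = fun k => if normu k = 0 then deriv u₀ k
          else deriv u₀ k +
            (u₁ k * deriv u₁ k + u₂ k * deriv u₂ k + u₃ k * deriv u₃ k) / normu k :=
        funext hE'
      rw [hEfun]
      apply Measurable.ite
      · exact hcn.measurable (measurableSet_singleton 0)
      · exact hmd0
      · exact hmd0.add ((((hcu1.measurable.mul c1.measurable).add
          (hcu2.measurable.mul c2.measurable)).add
          (hcu3.measurable.mul c3.measurable)).div hcn.measurable)
    have hmρ : Measurable ρ := hρ_mono.monotone.measurable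
    have hmg : Measurable g := by
      apply ((hce.measurable.mul hmE').abs).mul
      exact (hmρ.comp (measurable_const.mul hce.measurable.abs)).sub
        (hmρ.comp (measurable_const.mul hce.measurable.abs))
    obtain ⟨Me, hMe⟩ := (isCompact_Icc (a := -π) (b := π)).exists_bound_of_continuousOn
      hce.continuousOn
    have hDcont : Continuous (fun k => |deriv u₀ k| + |deriv u₁ k| + |deriv u₂ k|
        + |deriv u₃ k|) := ((c0.abs.add c1.abs).add c2.abs).add c3.abs
    obtain ⟨MD, hMD⟩ := (isCompact_Icc (a := -π) (b := π)).exists_bound_of_continuousOn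
      hDcont.continuousOn
    have hmem : (-π) ∈ Set.Icc (-π) π := Set.left_mem_Icc.mpr hππ
    have hMe0 : 0 ≤ Me := le_trans (norm_nonneg _) (hMe _ hmem)
    have hMD0 : 0 ≤ MD := le_trans (norm_nonneg _) (hMD _ hmem)
    have heb : ∀ k ∈ Set.Icc (-π) π, |e k| ≤ Me := fun k hk => by
      have h2 := hMe k hk; rwa [Real.norm_eq_abs] at h2
    have hE'b : ∀ k, |E' k| ≤ |deriv u₀ k| + |deriv u₁ k| + |deriv u₂ k| + |deriv u₃ k| := by
      intro k
      rw [hE' k]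
      split_ifs with h
      · have a1 := abs_nonneg (deriv u₁ k)
        have a2 := abs_nonneg (deriv u₂ k)
        have a3 := abs_nonneg (deriv u₃ k)
        linarith
      · have hn0 : 0 < normu k := lt_of_le_of_ne
          (by rw [hnormuq k]; exact Real.sqrt_nonneg _) (Ne.symm h)
        have hu1b : |u₁ k| ≤ normu k := by
          rw [hnormu k, ← Real.sqrt_sq_eq_abs]
          exact Real.sqrt_le_sqrt (by nlinarith [sq_nonneg (u₂ k), sq_nonneg (u₃ k)])
        have hu2b : |u₂ k| ≤ normu k := by
          rw [hnormu k, ← Real.sqrt_sq_eq_abs]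
          exact Real.sqrt_le_sqrt (by nlinarith [sq_nonneg (u₁ k), sq_nonneg (u₃ k)])
        have hu3b : |u₃ k| ≤ normu k := by
          rw [hnormu k, ← Real.sqrt_sq_eq_abs]
          exact Real.sqrt_le_sqrt (by nlinarith [sq_nonneg (u₁ k), sq_nonneg (u₂ k)])
        have habs : |u₁ k * deriv u₁ k + u₂ k * deriv u₂ k + u₃ k * deriv u₃ k|
            ≤ normu k * (|deriv u₁ k| + |deriv u₂ k| + |deriv u₃ k|) := by
          calc |u₁ k * deriv u₁ k + u₂ k * deriv u₂ k + u₃ k * deriv u₃ k|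
              ≤ |u₁ k * deriv u₁ k + u₂ k * deriv u₂ k| + |u₃ k * deriv u₃ k| :=
                abs_add_le _ _
            _ ≤ |u₁ k * deriv u₁ k| + |u₂ k * deriv u₂ k| + |u₃ k * deriv u₃ k| := by
                linarith [abs_add_le (u₁ k * deriv u₁ k) (u₂ k * deriv u₂ k)]
            _ = |u₁ k| * |deriv u₁ k| + |u₂ k| * |deriv u₂ k| + |u₃ k| * |deriv u₃ k| := by
                rw [abs_mul, abs_mul, abs_mul]
            _ ≤ normu k * (|deriv u₁ k| + |deriv u₂ k| + |deriv u₃ k|) := by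
                nlinarith [abs_nonneg (deriv u₁ k), abs_nonneg (deriv u₂ k),
                  abs_nonneg (deriv u₃ k), abs_nonneg (u₁ k), abs_nonneg (u₂ k),
                  abs_nonneg (u₃ k)]
        calc |deriv u₀ k + (u₁ k * deriv u₁ k + u₂ k * deriv u₂ k + u₃ k * deriv u₃ k)
              / normu k|
            ≤ |deriv u₀ k| + |(u₁ k * deriv u₁ k + u₂ k * deriv u₂ k + u₃ k * deriv u₃ k)
              / normu k| := abs_add_le _ _
          _ ≤ |deriv u₀ k| + (|deriv u₁ k| + |deriv u₂ k| + |deriv u₃ k|) := by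
              have h5 : |(u₁ k * deriv u₁ k + u₂ k * deriv u₂ k + u₃ k * deriv u₃ k) / normu k|
                  = |u₁ k * deriv u₁ k + u₂ k * deriv u₂ k + u₃ k * deriv u₃ k| / normu k := by
                rw [abs_div, abs_of_pos hn0]
              rw [h5]
              have h6 : |u₁ k * deriv u₁ k + u₂ k * deriv u₂ k + u₃ k * deriv u₃ k| / normu k
                  ≤ |deriv u₁ k| + |deriv u₂ k| + |deriv u₃ k| := by
                rw [div_le_iff₀ hn0]
                nlinarith [habs]
              linarith
          _ = |deriv u₀ k| + |deriv u₁ k| + |deriv u₂ k| + |deriv u₃ k| := by ring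
    have hρb : ∀ k ∈ Set.Icc (-π) π,
        ρ (βR * |e k|) - ρ (βL * |e k|) ≤ ρ (|βR| * Me) - ρ (-(|βL| * Me)) := by
      intro k hk
      have hek := heb k hk
      have hek0 := abs_nonneg (e k)
      have h1 : βR * |e k| ≤ |βR| * Me := by
        nlinarith [le_abs_self βR, abs_nonneg βR]
      have h2 : -(|βL| * Me) ≤ βL * |e k| := by
        nlinarith [neg_abs_le βL, abs_nonneg βL]
      have m1 := hρ_mono.monotone h1
      have m2 := hρ_mono.monotone h2
      linarith
    have hgb : ∀ k ∈ Set.Ioc (-π) π,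
        ‖g k‖ ≤ Me * MD * (ρ (|βR| * Me) - ρ (-(|βL| * Me))) := by
      intro k hk
      have hk' : k ∈ Set.Icc (-π) π := Set.Ioc_subset_Icc_self hk
      rw [Real.norm_eq_abs, abs_of_nonneg (hg0 k)]
      have h1 : |e k * E' k| ≤ Me * MD := by
        rw [abs_mul]
        have hE2 : |E' k| ≤ MD := by
          refine le_trans (hE'b k) ?_
          have h3 := hMD k hk'
          rw [Real.norm_eq_abs] at h3
          exact le_trans (le_abs_self _) h3
        exact mul_le_mul (heb k hk') hE2 (abs_nonneg _) hMe0
      have h2 := hρb k hk'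
      have h3 : 0 ≤ ρ (βR * |e k|) - ρ (βL * |e k|) := sub_nonneg.mpr (hρ_mono.monotone
        (mul_le_mul_of_nonneg_right hβ.le (abs_nonneg _)))
      exact mul_le_mul h1 h2 h3 (mul_nonneg hMe0 hMD0)
    have hInt : IntegrableOn g (Set.Ioc (-π) π) := by
      apply Measure.integrableOn_of_bounded (measure_Ioc_lt_top).ne
        hmg.aestronglyMeasurable
      exact (ae_restrict_iff' measurableSet_Ioc).mpr (Filter.Eventually.of_forall hgb)
    obtain ⟨a', b', hk₀ab, hab_sub⟩ := mem_nhds_iff_exists_Ioo_subset.mp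
      (Filter.inter_mem hnhds (isOpen_Ioo.mem_nhds hk₀))
    have hIpos : 0 < ∫ k in Set.Ioc (-π) π, g k := by
      rw [integral_pos_iff_support_of_nonneg (fun k => hg0 k) hInt]
      have hIoosub : Set.Ioo a' b' ⊆ Function.support g := by
        intro x hx
        obtain ⟨hne, _⟩ := hab_sub hx
        have hne' : e x * E' x ≠ 0 := hne
        have h1 : 0 < |e x * E' x| := abs_pos.mpr hne'
        have h2 : 0 < ρ (βR * |e x|) - ρ (βL * |e x|) := by
          apply sub_pos.mpr
          apply hρ_mono
          exact mul_lt_mul_of_pos_right hβ (abs_pos.mpr (left_ne_zero_of_mul hne'))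
        exact ne_of_gt (mul_pos h1 h2)
      have hIoo_sub2 : Set.Ioo a' b' ⊆ Set.Ioc (-π) π := fun x hx =>
        Set.Ioo_subset_Ioc_self (hab_sub hx).2
      calc (0 : ENNReal) < volume (Set.Ioo a' b') := by
            rw [Real.volume_Ioo]
            exact ENNReal.ofReal_pos.mpr (by linarith [hk₀ab.1, hk₀ab.2])
        _ = (volume.restrict (Set.Ioc (-π) π)) (Set.Ioo a' b') := by
            rw [Measure.restrict_apply measurableSet_Ioo,
              Set.inter_eq_left.mpr hIoo_sub2]
        _ ≤ _ := measure_mono hIoosub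
    have hrw : (∫ k in (-π)..π, |e k * E' k| * (ρ (βR * |e k|) - ρ (βL * |e k|)))
        = ∫ k in Set.Ioc (-π) π, g k := intervalIntegral.integral_of_le hππ
    rw [hrw]
    have h4π : 0 < 1 / (4 * π) := by positivity
    exact mul_pos h4π hIpos
  -- now produce the good point
  by_cases hq0all : ∀ k, q k = 0
  · -- u₁, u₂, u₃ all vanish
    have hu1z : ∀ k, u₁ k = 0 := by
      intro k
      have h2 := hq0all k
      rw [hq k] at h2
      have h3 : u₁ k ^ 2 = 0 := by nlinarith [sq_nonneg (u₁ k), sq_nonneg (u₂ k), sq_nonneg (u₃ k)]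
      exact (pow_eq_zero_iff two_ne_zero).mp h3
    have hu2z : ∀ k, u₂ k = 0 := by
      intro k
      have h2 := hq0all k
      rw [hq k] at h2
      have h3 : u₂ k ^ 2 = 0 := by nlinarith [sq_nonneg (u₁ k), sq_nonneg (u₂ k), sq_nonneg (u₃ k)]
      exact (pow_eq_zero_iff two_ne_zero).mp h3
    have hu3z : ∀ k, u₃ k = 0 := by
      intro k
      have h2 := hq0all k
      rw [hq k] at h2
      have h3 : u₃ k ^ 2 = 0 := by nlinarith [sq_nonneg (u₁ k), sq_nonneg (u₂ k), sq_nonneg (u₃ k)]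
      exact (pow_eq_zero_iff two_ne_zero).mp h3
    have hu0ne : ¬ ∀ k, u₀ k = 0 := fun h => hnz fun k => ⟨h k, hu1z k, hu2z k, hu3z k⟩
    have hnz0 : ∀ k, normu k = 0 := fun k => by
      rw [hnormuq k, hq0all k, Real.sqrt_zero]
    have hEd : ∀ k, E' k = deriv u₀ k := fun k => by rw [hE' k, if_pos (hnz0 k)]
    have heu : ∀ k, e k = u₀ k := fun k => by rw [he k, hnz0 k, add_zero]
    have hprodne : ¬ ∀ k ∈ Set.Ioo (-π) π, u₀ k * deriv u₀ k = 0 := by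
      intro h
      have hall : ∀ k, u₀ k * deriv u₀ k = 0 :=
        eq_zero_of_zero_on_Ioo (fun x hx => (A0 x hx).mul (A0' x hx)) (by linarith) h
      have hder : ∀ k, deriv u₀ k = 0 := zero_of_mul_zero A0 A0' hall hu0ne
      have hconst : ∀ x y, u₀ x = u₀ y := is_const_of_deriv_eq_zero hd0 hder
      have h00 : u₀ 0 = 0 := by have h2 := hodd₀ 0; rw [neg_zero] at h2; linarith
      exact hu0ne fun k => (hconst k 0).trans h00
    push_neg at hprodne
    obtain ⟨k₀, hk₀, hk₀ne⟩ := hprodne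
    refine ⟨k₀, hk₀, ?_⟩
    have hcont : ContinuousAt (fun k => u₀ k * deriv u₀ k) k₀ := (hcu0.mul c0).continuousAt
    have hev := hcont.eventually_ne hk₀ne
    have hfin : ∀ᶠ k in nhds k₀, e k * E' k ≠ 0 := by
      filter_upwards [hev] with k hk
      rw [heu k, hEd k]
      exact hk
    exact hfin
  · by_cases hu0all : ∀ k, u₀ k = 0
    · -- Case II.A : u₀ ≡ 0, uu ≢ 0
      have hd0z : ∀ k, deriv u₀ k = 0 := by
        have h2 : u₀ = fun _ => (0 : ℝ) := funext hu0all
        intro k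
        rw [h2]
        exact deriv_const k 0
      have huune := hyp_i hu0all
      have huune' : ¬ ∀ k, uu k = 0 := fun h => huune fun k => by
        rw [← huu k]; exact h k
      have hIoo : ¬ ∀ k ∈ Set.Ioo (-π) π, uu k = 0 := fun h =>
        huune' (eq_zero_of_zero_on_Ioo Auu (by linarith) h)
      push_neg at hIoo
      obtain ⟨k₀, hk₀, hk₀ne⟩ := hIoo
      have hqk : q k₀ ≠ 0 := by
        intro h
        rw [hq k₀] at h
        have h1 : u₁ k₀ = 0 := (pow_eq_zero_iff two_ne_zero).mp
          (by nlinarith [sq_nonneg (u₁ k₀), sq_nonneg (u₂ k₀), sq_nonneg (u₃ k₀)])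
        have h2 : u₂ k₀ = 0 := (pow_eq_zero_iff two_ne_zero).mp
          (by nlinarith [sq_nonneg (u₁ k₀), sq_nonneg (u₂ k₀), sq_nonneg (u₃ k₀)])
        have h3 : u₃ k₀ = 0 := (pow_eq_zero_iff two_ne_zero).mp
          (by nlinarith [sq_nonneg (u₁ k₀), sq_nonneg (u₂ k₀), sq_nonneg (u₃ k₀)])
        apply hk₀ne
        rw [huu k₀, h1, h2, h3]
        ring
      apply hkey_of k₀ hk₀ hqk
      have hn0 : normu k₀ ≠ 0 := hnormu_ne k₀ hqk
      rw [he k₀, hE' k₀, if_neg hn0, hu0all k₀, hd0z k₀, zero_add, zero_add, ← huu k₀,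
        mul_comm, div_mul_cancel₀ _ hn0]
      exact hk₀ne
    · -- Case II.B : u₀ ≢ 0, P ≢ 0
      have hPne := hyp_ii hu0all
      have hPne' : ¬ ∀ k, P k = 0 := fun h => hPne fun k => by
        have h2 := h k
        rw [hP k, hq k] at h2
        exact h2
      by_cases hW : ∀ k ∈ Set.Ioo (-π) π, q k ≠ 0 → e k * E' k = 0
      · exfalso
        have hWne : ∃ w ∈ Set.Ioo (-π) π, q w ≠ 0 := by
          by_contra h
          push_neg at h
          exact hq0all (eq_zero_of_zero_on_Ioo Aq (by linarith) h)
        obtain ⟨w, hw, hqw⟩ := hWne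
        have hevW : ∀ᶠ x in nhds w, x ∈ Set.Ioo (-π) π ∧ q x ≠ 0 :=
          (isOpen_Ioo.eventually_mem hw).and (hcq.continuousAt.eventually_ne hqw)
        have hG : ∀ k ∈ Set.Ioo (-π) π, q k ≠ 0 → P k * deriv P k = 0 := by
          intro k hk hqk
          have hn0 : normu k ≠ 0 := hnormu_ne k hqk
          have hP1 : HasDerivAt (fun x => e x * (u₀ x - normu x))
              (E' k * (u₀ k - normu k) + e k * (deriv u₀ k - uu k / normu k)) k :=
            (heAt k hqk).mul (htAt k hqk)
          have hPeq : P = fun x => e x * (u₀ x - normu x) := funext hPfact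
          rw [← hPeq] at hP1
          have hdPk : deriv P k
              = E' k * (u₀ k - normu k) + e k * (deriv u₀ k - uu k / normu k) := hP1.deriv
          have hmk : -k ∈ Set.Ioo (-π) π := ⟨by linarith [hk.2], by linarith [hk.1]⟩
          have hqmk : q (-k) ≠ 0 := by rw [hqev k]; exact hqk
          have hEmk : E' (-k) = deriv u₀ k - uu k / normu k := by
            rw [hE' (-k), if_neg (hnormu_ne _ hqmk), ← huu (-k), huuodd k, hnev k,
              deriv_even_of_odd hd0 hodd₀ k]
            ring
          have hemk : e (-k) = -(u₀ k - normu k) := by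
            rw [he (-k), hodd₀ k, hnev k]; ring
          have h1 : e k * E' k = 0 := hW k hk hqk
          have h2 : e (-k) * E' (-k) = 0 := hW (-k) hmk hqmk
          rw [hemk, hEmk] at h2
          have h2' : (u₀ k - normu k) * (deriv u₀ k - uu k / normu k) = 0 := by
            linear_combination -h2
          rw [hPfact k, hdPk]
          calc e k * (u₀ k - normu k)
                * (E' k * (u₀ k - normu k) + e k * (deriv u₀ k - uu k / normu k))
              = (u₀ k - normu k) ^ 2 * (e k * E' k)
                + e k ^ 2 * ((u₀ k - normu k) * (deriv u₀ k - uu k / normu k)) := by ring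
            _ = 0 := by rw [h1, h2']; ring
        have hGall : ∀ x, P x * deriv P x = 0 := by
          apply eq_zero_of_eventually_zero
            (fun x hx => (AP x hx).mul (AP.deriv x hx)) (z := w)
          filter_upwards [hevW] with x hx
          exact hG x hx.1 hx.2
        have hdPall : ∀ x, deriv P x = 0 := zero_of_mul_zero AP AP.deriv hGall hPne'
        have huu_eq : ∀ k, uu k = u₀ k * deriv u₀ k := by
          intro k
          have h1 := (hPdAt k).deriv
          rw [hdPall k] at h1
          linarith
        have hfinal : ∀ k ∈ Set.Ioo (-π) π, q k ≠ 0 → P k * deriv u₀ k = 0 := by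
          intro k hk hqk
          have hn0 : normu k ≠ 0 := hnormu_ne k hqk
          have h1 : e k * E' k = 0 := hW k hk hqk
          rw [hE' k, if_neg hn0, ← huu k, huu_eq k] at h1
          have h3 : deriv u₀ k * e k ^ 2 / normu k = 0 := by
            rw [← h1, he k]
            field_simp
            ring
          have h3' : deriv u₀ k * e k ^ 2 = 0 := (div_eq_zero_iff.mp h3).resolve_right hn0
          rcases mul_eq_zero.mp h3' with h | h
          · rw [h, mul_zero]
          · have he0 : e k = 0 := (pow_eq_zero_iff two_ne_zero).mp h
            rw [hPfact k, he0, zero_mul, zero_mul]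
        have hfinalall : ∀ x, P x * deriv u₀ x = 0 := by
          apply eq_zero_of_eventually_zero
            (fun x hx => (AP x hx).mul (A0' x hx)) (z := w)
          filter_upwards [hevW] with x hx
          exact hfinal x hx.1 hx.2
        have hd0all : ∀ x, deriv u₀ x = 0 := zero_of_mul_zero AP A0' hfinalall hPne'
        have hconst : ∀ x y, u₀ x = u₀ y := is_const_of_deriv_eq_zero hd0 hd0all
        have h00 : u₀ 0 = 0 := by have h2 := hodd₀ 0; rw [neg_zero] at h2; linarith
        exact hu0all fun k => (hconst k 0).trans h00
      · push_neg at hW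
        obtain ⟨k₀, hk₀, hqk, hne⟩ := hW
        exact hkey_of k₀ hk₀ hqk hne
end
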